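/- arXiv:2102.13105 — 5 statements merged into one kernel-verified Lean document; each statement's English description precedes it below -/
import Mathlib

section
/- Let f : ℝ → ℂ be differentiable, and suppose there exist constants C ≥ 0 and a natural number N with ‖f(x)‖ ≤ C·(1+|x|)^N and ‖f′(x)‖ ≤ C·(1+|x|)^N for all x ∈ ℝ. Then for every Schwartz function φ : ℝ → ℂ, ∫_ℝ f′(x)·φ(x) dx = −∫_ℝ f(x)·φ′(x) dx. -/
open MeasureTheory Filter

lemma aux_integrable_mul_schwartz {g : ℝ → ℂ}
    (hg : AEStronglyMeasurable g volume) {C : ℝ} (hC : 0 ≤ C) {N : ℕ}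
    (hb : ∀ x : ℝ, ‖g x‖ ≤ C * (1 + |x|) ^ N) (ψ : SchwartzMap ℝ ℂ) :
    Integrable (fun x : ℝ ↦ g x * ψ x) := by
  have h1 : Integrable (fun x : ℝ ↦ C * 2 ^ N * ‖ψ x‖ +
      C * 2 ^ N * (‖x‖ ^ N * ‖ψ x‖)) :=
    (ψ.integrable.norm.const_mul _).add ((ψ.integrable_pow_mul volume N).const_mul _)
  apply h1.mono' (hg.mul ψ.continuous.aestronglyMeasurable)
  filter_upwards with x
  have hpow : (1 + |x|) ^ N ≤ 2 ^ N * (1 + |x| ^ N) := by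
    calc (1 + |x|) ^ N ≤ (2 * max 1 |x|) ^ N := by
          apply pow_le_pow_left₀ (by positivity)
          rcases le_total (|x|) 1 with h | h
          · rw [max_eq_left h]; linarith
          · rw [max_eq_right h]; linarith
      _ = 2 ^ N * (max 1 |x|) ^ N := by rw [mul_pow]
      _ ≤ 2 ^ N * (1 + |x| ^ N) := by
          gcongr
          rcases le_total (|x|) 1 with h | h
          · rw [max_eq_left h]; simp [pow_nonneg (abs_nonneg x) N]
          · rw [max_eq_right h]; nlinarith [pow_nonneg (abs_nonneg x) N]
  calc ‖g x * ψ x‖ = ‖g x‖ * ‖ψ x‖ := norm_mul _ _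
    _ ≤ (C * (1 + |x|) ^ N) * ‖ψ x‖ := by gcongr; exact hb x
    _ ≤ (C * (2 ^ N * (1 + |x| ^ N))) * ‖ψ x‖ := by gcongr
    _ = C * 2 ^ N * ‖ψ x‖ + C * 2 ^ N * (‖x‖ ^ N * ‖ψ x‖) := by
        simp only [Real.norm_eq_abs]; ring

/-- Integration by parts against a Schwartz function, for a differentiable function of
polynomial growth: `⟨f′, φ⟩ = −⟨f, φ′⟩`. -/
theorem integral_deriv_mul_schwartz
    (f : ℝ → ℂ) (hf : Differentiable ℝ f)
    (C : ℝ) (hC : 0 ≤ C) (N : ℕ)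
    (hfb : ∀ x : ℝ, ‖f x‖ ≤ C * (1 + |x|) ^ N)
    (hf'b : ∀ x : ℝ, ‖deriv f x‖ ≤ C * (1 + |x|) ^ N)
    (φ : SchwartzMap ℝ ℂ) :
    ∫ x : ℝ, deriv f x * φ x = -∫ x : ℝ, f x * deriv (⇑φ) x := by
  have hfm : AEStronglyMeasurable f volume := hf.continuous.aestronglyMeasurable
  have hf'm : AEStronglyMeasurable (deriv f) volume :=
    (stronglyMeasurable_deriv f).aestronglyMeasurable
  have hφ' : ⇑(SchwartzMap.derivCLM ℝ ℂ φ) = deriv (⇑φ) := by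
    ext x; exact SchwartzMap.derivCLM_apply ℝ φ x
  have huv' : Integrable (f * deriv (⇑φ)) := by
    rw [← hφ']
    exact aux_integrable_mul_schwartz hfm hC hfb _
  have hu'v : Integrable (deriv f * ⇑φ) :=
    aux_integrable_mul_schwartz hf'm hC hf'b φ
  have huv : Integrable (f * ⇑φ) :=
    aux_integrable_mul_schwartz hfm hC hfb φ
  have key := integral_mul_deriv_eq_deriv_mul_of_integrable
    (u := f) (v := ⇑φ) (u' := deriv f) (v' := deriv (⇑φ))
    (fun x _ ↦ (hf x).hasDerivAt)
    (fun x _ ↦ (φ.differentiable.differentiableAt).hasDerivAt)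
    huv' hu'v huv
  rw [key]; simp
end

section
/- For every real λ > 0 and every q ∈ ℝ³, the function x ↦ (exp(−λ‖x‖)/‖x‖) · exp(−i⟪q,x⟫) is integrable on ℝ³ and ∫_{ℝ³} (exp(−λ‖x‖)/‖x‖) · exp(−i⟪q,x⟫) dx = 4π/(λ² + ‖q‖²). (The three-dimensional Fourier transform of the screened Coulomb/Yukawa potential.) -/
open MeasureTheory Filter
open scoped RealInnerProductSpace

namespace YukawaAux

open Set Real


lemma sqrtpos {z ρ : ℝ} (hz : z ≠ 0) : 0 < Real.sqrt (z ^ 2 + ρ ^ 2) :=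
  Real.sqrt_pos.2 (by positivity)

lemma radial_integrable {l : ℝ} (hl : 0 < l) {z : ℝ} (hz : z ≠ 0) :
    IntegrableOn (fun ρ : ℝ => ρ * (Real.exp (-(l * Real.sqrt (z ^ 2 + ρ ^ 2))) /
      Real.sqrt (z ^ 2 + ρ ^ 2))) (Ioi (0:ℝ)) := by
  have hcont : Continuous fun ρ : ℝ => ρ * (Real.exp (-(l * Real.sqrt (z ^ 2 + ρ ^ 2))) /
      Real.sqrt (z ^ 2 + ρ ^ 2)) := by
    refine continuous_id.mul (Continuous.div (by continuity) (by continuity) fun ρ => ?_)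
    exact (sqrtpos hz).ne'
  refine Integrable.mono (exp_neg_integrableOn_Ioi 0 hl) hcont.aestronglyMeasurable.restrict ?_
  filter_upwards [ae_restrict_mem measurableSet_Ioi] with ρ hρ
  have hρ0 : (0:ℝ) < ρ := hρ
  have hs : 0 < Real.sqrt (z ^ 2 + ρ ^ 2) := sqrtpos hz
  have h1 : ρ ≤ Real.sqrt (z ^ 2 + ρ ^ 2) := by
    calc ρ = Real.sqrt (ρ ^ 2) := (Real.sqrt_sq hρ0.le).symm
    _ ≤ _ := Real.sqrt_le_sqrt (by nlinarith [sq_nonneg z])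
  rw [Real.norm_eq_abs, Real.norm_eq_abs, abs_of_nonneg (by positivity),
    abs_of_nonneg (Real.exp_pos _).le]
  calc ρ * (Real.exp (-(l * Real.sqrt (z ^ 2 + ρ ^ 2))) / Real.sqrt (z ^ 2 + ρ ^ 2))
      ≤ Real.sqrt (z ^ 2 + ρ ^ 2) *
        (Real.exp (-(l * Real.sqrt (z ^ 2 + ρ ^ 2))) / Real.sqrt (z ^ 2 + ρ ^ 2)) := by
        apply mul_le_mul_of_nonneg_right h1 (by positivity)
    _ = Real.exp (-(l * Real.sqrt (z ^ 2 + ρ ^ 2))) := by field_simp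
    _ ≤ Real.exp (-l * ρ) := by
        apply Real.exp_le_exp.2
        nlinarith [mul_le_mul_of_nonneg_left h1 hl.le]

lemma radial_integral {l : ℝ} (hl : 0 < l) {z : ℝ} (hz : z ≠ 0) :
    ∫ ρ in Ioi (0:ℝ), ρ * (Real.exp (-(l * Real.sqrt (z ^ 2 + ρ ^ 2))) /
      Real.sqrt (z ^ 2 + ρ ^ 2)) = Real.exp (-(l * |z|)) / l := by
  have hderiv : ∀ ρ ∈ Ici (0:ℝ),
      HasDerivAt (fun ρ : ℝ => -(1/l) * Real.exp (-(l * Real.sqrt (z ^ 2 + ρ ^ 2))))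
        (ρ * (Real.exp (-(l * Real.sqrt (z ^ 2 + ρ ^ 2))) / Real.sqrt (z ^ 2 + ρ ^ 2))) ρ := by
    intro ρ _
    have h1 : HasDerivAt (fun ρ : ℝ => z ^ 2 + ρ ^ 2) (2 * ρ) ρ := by
      simpa using (hasDerivAt_pow 2 ρ).const_add (z ^ 2)
    have h2 : HasDerivAt (fun ρ : ℝ => Real.sqrt (z ^ 2 + ρ ^ 2))
        (2 * ρ / (2 * Real.sqrt (z ^ 2 + ρ ^ 2))) ρ := h1.sqrt (by positivity)
    have h3 := (((h2.const_mul l).neg).exp).const_mul (-(1/l))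
    refine h3.congr_deriv ?_
    have hs := sqrtpos (ρ := ρ) hz
    simp only [Pi.neg_apply]
    field_simp
  have htend : Tendsto (fun ρ : ℝ => -(1/l) * Real.exp (-(l * Real.sqrt (z ^ 2 + ρ ^ 2))))
      atTop (nhds 0) := by
    have h4 : Tendsto (fun ρ : ℝ => Real.sqrt (z ^ 2 + ρ ^ 2)) atTop atTop := by
      apply tendsto_atTop_mono (fun ρ => ?_) tendsto_id
      calc id ρ ≤ |ρ| := le_abs_self ρ
        _ = Real.sqrt (ρ ^ 2) := (Real.sqrt_sq_eq_abs ρ).symm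
        _ ≤ _ := Real.sqrt_le_sqrt (by nlinarith [sq_nonneg z])
    have h5 : Tendsto (fun ρ : ℝ => -(l * Real.sqrt (z ^ 2 + ρ ^ 2))) atTop atBot :=
      tendsto_neg_atBot_iff.2 (h4.const_mul_atTop hl)
    have := (Real.tendsto_exp_atBot.comp h5).const_mul (-(1/l))
    simpa using this
  have key := integral_Ioi_of_hasDerivAt_of_tendsto' hderiv (radial_integrable hl hz) htend
  rw [key]
  have : Real.sqrt (z ^ 2 + 0 ^ 2) = |z| := by
    rw [← Real.sqrt_sq_eq_abs]; norm_num
  rw [this]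
  field_simp
  ring



lemma exp_abs_integrableOn_Ioi {c : ℝ} (hc : 0 < c) :
    IntegrableOn (fun x : ℝ => Real.exp (-(c * |x|))) (Ioi (0:ℝ)) := by
  refine Integrable.mono' (exp_neg_integrableOn_Ioi 0 hc)
    (Continuous.aestronglyMeasurable (by continuity)).restrict ?_
  filter_upwards [ae_restrict_mem measurableSet_Ioi] with x hx
  rw [Real.norm_eq_abs, _root_.abs_of_nonneg (Real.exp_pos _).le]
  apply Real.exp_le_exp.2
  have : x ≤ |x| := le_abs_self x
  nlinarith

lemma exp_abs_integrable {c : ℝ} (hc : 0 < c) :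
    Integrable (fun x : ℝ => Real.exp (-(c * |x|))) := by
  rw [← integrableOn_univ, ← Iio_union_Ici (a := (0:ℝ)), integrableOn_union,
    integrableOn_Ici_iff_integrableOn_Ioi]
  refine ⟨?_, exp_abs_integrableOn_Ioi hc⟩
  rw [← (Measure.measurePreserving_neg (volume : Measure ℝ)).integrableOn_comp_preimage
      (Homeomorph.neg ℝ).measurableEmbedding]
  simpa [Function.comp_def] using exp_abs_integrableOn_Ioi hc

lemma cexp_Ioi {a : ℂ} (ha : 0 < a.re) :
    (∫ x in Ioi (0:ℝ), Complex.exp (-(a * x))) = 1 / a := by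
  have ha0 : a ≠ 0 := fun h => by simp [h] at ha
  have hderiv : ∀ x ∈ Ici (0:ℝ),
      HasDerivAt (fun x : ℝ => -(1/a) * Complex.exp (-(a * x))) (Complex.exp (-(a * x))) x := by
    intro x _
    have h1 : HasDerivAt (fun x : ℝ => Complex.exp (-(a * x)))
        (Complex.exp (-(a * x)) * (-a)) x := by
      have h0 : HasDerivAt (fun w : ℂ => Complex.exp (-(a * w)))
          (Complex.exp (-(a * (x:ℂ))) * (-a)) (x:ℂ) := by
        simpa using (((hasDerivAt_id (x:ℂ)).const_mul a).neg).cexp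
      exact h0.comp_ofReal
    have := h1.const_mul (-(1/a))
    refine this.congr_deriv ?_
    rw [mul_comm (Complex.exp _), ← mul_assoc, neg_mul_neg, one_div, inv_mul_cancel₀ ha0, one_mul]
  have hint : IntegrableOn (fun x : ℝ => Complex.exp (-(a * x))) (Ioi (0:ℝ)) := by
    refine Integrable.mono' (exp_neg_integrableOn_Ioi 0 ha)
      (Continuous.aestronglyMeasurable (by continuity)).restrict ?_
    filter_upwards [] with x
    rw [Complex.norm_exp]
    simp
  have htend : Tendsto (fun x : ℝ => -(1/a) * Complex.exp (-(a * x))) atTop (nhds 0) := by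
    have h2 : Tendsto (fun x : ℝ => Complex.exp (-(a * x))) atTop (nhds 0) := by
      rw [tendsto_zero_iff_norm_tendsto_zero]
      have h3 : Tendsto (fun x : ℝ => Real.exp (-(a.re * x))) atTop (nhds 0) := by
        apply Real.tendsto_exp_atBot.comp
        exact tendsto_neg_atBot_iff.2 (tendsto_id.const_mul_atTop ha)
      refine h3.congr fun x => ?_
      rw [Complex.norm_exp]
      norm_num
    simpa using h2.const_mul (-(1/a))
  have key := integral_Ioi_of_hasDerivAt_of_tendsto' hderiv hint htend
  rw [key]
  simp

lemma oneD {l m : ℝ} (hl : 0 < l) :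
    (∫ z : ℝ, ((Real.exp (-(l * |z|)) : ℝ) : ℂ) * Complex.exp (-(Complex.I * (m * z))))
      = 2 * l / (l ^ 2 + m ^ 2) := by
  set f : ℝ → ℂ := fun z => ((Real.exp (-(l * |z|)) : ℝ) : ℂ) * Complex.exp (-(Complex.I * (m * z)))
    with hf
  have hmeas : Continuous f := by
    apply Continuous.mul
    · exact Complex.continuous_ofReal.comp (by continuity)
    · apply Complex.continuous_exp.comp; continuity
  have hbound : ∀ z : ℝ, ‖f z‖ = Real.exp (-(l * |z|)) := by
    intro z
    rw [hf]
    simp only [norm_mul, Complex.norm_real, Real.norm_eq_abs, Complex.norm_exp]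
    have : (-(Complex.I * (m * z))).re = 0 := by simp
    rw [this, Real.exp_zero, _root_.abs_of_nonneg (Real.exp_pos _).le, mul_one]
  have hint : Integrable f := by
    refine Integrable.mono' (exp_abs_integrable hl) hmeas.aestronglyMeasurable ?_
    filter_upwards [] with z
    rw [hbound z]
  have hIci : ∫ z in Ici (0:ℝ), f z = 1 / ((l : ℂ) + Complex.I * m) := by
    rw [MeasureTheory.integral_Ici_eq_integral_Ioi]
    rw [show (1 / ((l:ℂ) + Complex.I * m)) = ∫ x in Ioi (0:ℝ),
        Complex.exp (-(((l:ℂ) + Complex.I * m) * x)) from (cexp_Ioi (by simp [hl])).symm]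
    apply setIntegral_congr_fun measurableSet_Ioi
    intro z hz
    rw [hf]
    simp only
    rw [abs_of_pos hz, Complex.ofReal_exp, ← Complex.exp_add]
    congr 1
    push_cast
    ring
  have hIio : ∫ z in Iio (0:ℝ), f z = 1 / ((l : ℂ) - Complex.I * m) := by
    have h1 : ∫ z in Iio (0:ℝ), f z = ∫ z in Ioi (0:ℝ), f (-z) := by
      rw [integral_comp_neg_Ioi]
      rw [MeasureTheory.integral_Iic_eq_integral_Iio]
      norm_num
    rw [h1]
    rw [show (1 / ((l:ℂ) - Complex.I * m)) = ∫ x in Ioi (0:ℝ),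
        Complex.exp (-(((l:ℂ) - Complex.I * m) * x)) from (cexp_Ioi (by simp [hl])).symm]
    apply setIntegral_congr_fun measurableSet_Ioi
    intro z hz
    rw [hf]
    simp only
    rw [abs_neg, abs_of_pos hz, Complex.ofReal_exp, ← Complex.exp_add]
    congr 1
    push_cast
    ring
  have hsplit := intervalIntegral.integral_Iio_add_Ici (f := f) (μ := volume) (b := (0:ℝ))
    hint.integrableOn hint.integrableOn
  rw [← hsplit, hIio, hIci]
  have h1 : ((l:ℂ) + Complex.I * m) ≠ 0 := by
    intro h
    have := congrArg Complex.re h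
    simp at this
    exact hl.ne' this
  have h2 : ((l:ℂ) - Complex.I * m) ≠ 0 := by
    intro h
    have := congrArg Complex.re h
    simp at this
    exact hl.ne' this
  have h3 : ((l:ℂ) ^ 2 + (m:ℂ) ^ 2) ≠ 0 := by
    have : ((l:ℂ) ^ 2 + (m:ℂ) ^ 2) = ((l:ℂ) + Complex.I * m) * ((l:ℂ) - Complex.I * m) := by
      ring_nf
      rw [Complex.I_sq]
      ring
    rw [this]
    exact mul_ne_zero h1 h2
  rw [div_add_div _ _ h2 h1, div_eq_div_iff (mul_ne_zero h2 h1) h3]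
  ring_nf
  rw [Complex.I_sq]
  ring



lemma sqrtpos' {z a b : ℝ} (hz : z ≠ 0) : 0 < Real.sqrt (z ^ 2 + (a ^ 2 + b ^ 2)) :=
  Real.sqrt_pos.2 (by positivity)

lemma twoD_integrable {l : ℝ} (hl : 0 < l) {z : ℝ} (hz : z ≠ 0) :
    Integrable (fun v : ℝ × ℝ => Real.exp (-(l * Real.sqrt (z ^ 2 + (v.1 ^ 2 + v.2 ^ 2)))) /
      Real.sqrt (z ^ 2 + (v.1 ^ 2 + v.2 ^ 2))) := by
  have hl2 : 0 < l / 2 := by linarith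
  have hmaj : Integrable (fun v : ℝ × ℝ =>
      (Real.exp (-(l/2 * |v.1|)) * Real.exp (-(l/2 * |v.2|))) / |z|) := by
    have := ((exp_abs_integrable hl2).mul_prod (exp_abs_integrable hl2)).div_const |z|
    rw [Measure.volume_eq_prod ℝ ℝ]
    exact this
  have hcont : Continuous (fun v : ℝ × ℝ =>
      Real.exp (-(l * Real.sqrt (z ^ 2 + (v.1 ^ 2 + v.2 ^ 2)))) /
      Real.sqrt (z ^ 2 + (v.1 ^ 2 + v.2 ^ 2))) := by
    refine Continuous.div (by continuity) (by continuity) fun v => (sqrtpos' hz).ne'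
  refine Integrable.mono' hmaj hcont.aestronglyMeasurable ?_
  filter_upwards [] with v
  set s := Real.sqrt (z ^ 2 + (v.1 ^ 2 + v.2 ^ 2)) with hs
  have hspos : 0 < s := sqrtpos' hz
  have hzpos : 0 < |z| := abs_pos.2 hz
  have h1 : |z| ≤ s := by
    rw [hs, ← Real.sqrt_sq_eq_abs]
    exact Real.sqrt_le_sqrt (by nlinarith [sq_nonneg v.1, sq_nonneg v.2])
  have h2 : (|v.1| + |v.2|) / 2 ≤ s := by
    rw [hs]
    rw [show (|v.1| + |v.2|) / 2 = Real.sqrt (((|v.1| + |v.2|) / 2) ^ 2) from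
      (Real.sqrt_sq (by positivity)).symm]
    apply Real.sqrt_le_sqrt
    nlinarith [sq_nonneg (|v.1| - |v.2|), sq_nonneg z, sq_abs v.1, sq_abs v.2]
  rw [Real.norm_eq_abs, _root_.abs_of_nonneg (by positivity)]
  have hnum : Real.exp (-(l * s)) ≤ Real.exp (-(l/2 * |v.1|)) * Real.exp (-(l/2 * |v.2|)) := by
    rw [← Real.exp_add]
    apply Real.exp_le_exp.2
    nlinarith
  exact div_le_div₀ (by positivity) hnum hzpos h1

lemma twoD_integral {l : ℝ} (hl : 0 < l) {z : ℝ} (hz : z ≠ 0) :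
    (∫ v : ℝ × ℝ, Real.exp (-(l * Real.sqrt (z ^ 2 + (v.1 ^ 2 + v.2 ^ 2)))) /
      Real.sqrt (z ^ 2 + (v.1 ^ 2 + v.2 ^ 2)))
      = (2 * π / l) * Real.exp (-(l * |z|)) := by
  rw [← integral_comp_polarCoord_symm]
  have hfun : ∀ p : ℝ × ℝ,
      p.1 • (Real.exp (-(l * Real.sqrt (z ^ 2 + ((polarCoord.symm p).1 ^ 2 +
        (polarCoord.symm p).2 ^ 2)))) / Real.sqrt (z ^ 2 + ((polarCoord.symm p).1 ^ 2 +
        (polarCoord.symm p).2 ^ 2)))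
      = (fun ρ : ℝ => ρ * (Real.exp (-(l * Real.sqrt (z ^ 2 + ρ ^ 2))) /
          Real.sqrt (z ^ 2 + ρ ^ 2))) p.1 * (fun _ : ℝ => (1:ℝ)) p.2 := by
    intro p
    have h : (polarCoord.symm p).1 ^ 2 + (polarCoord.symm p).2 ^ 2 = p.1 ^ 2 := by
      simp only [polarCoord_symm_apply]
      nlinarith [sin_sq_add_cos_sq p.2]
    rw [h]
    simp [smul_eq_mul]
  calc (∫ p in polarCoord.target,
        p.1 • (Real.exp (-(l * Real.sqrt (z ^ 2 + ((polarCoord.symm p).1 ^ 2 +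
          (polarCoord.symm p).2 ^ 2)))) / Real.sqrt (z ^ 2 + ((polarCoord.symm p).1 ^ 2 +
          (polarCoord.symm p).2 ^ 2))))
      = ∫ p in polarCoord.target,
        (fun ρ : ℝ => ρ * (Real.exp (-(l * Real.sqrt (z ^ 2 + ρ ^ 2))) /
          Real.sqrt (z ^ 2 + ρ ^ 2))) p.1 * (fun _ : ℝ => (1:ℝ)) p.2 := by
        exact integral_congr_ae (Filter.Eventually.of_forall fun p => hfun p)
    _ = (∫ ρ in Ioi (0:ℝ), ρ * (Real.exp (-(l * Real.sqrt (z ^ 2 + ρ ^ 2))) /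
          Real.sqrt (z ^ 2 + ρ ^ 2))) * (∫ _ in Ioo (-π) π, (1:ℝ)) := by
        rw [← setIntegral_prod_mul]
        rfl
    _ = (2 * π / l) * Real.exp (-(l * |z|)) := by
        rw [radial_integral hl hz]
        simp only [MeasureTheory.integral_const, MeasurableSet.univ, Measure.restrict_apply,
          univ_inter, Real.volume_Ioo, smul_eq_mul, mul_one]
        rw [measureReal_restrict_apply_univ, measureReal_def, Real.volume_Ioo,
          ENNReal.toReal_ofReal (by linarith [Real.pi_pos] : (0:ℝ) ≤ π - -π)]
        field_simp
        ring


end YukawaAux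

namespace YukawaAuxB
open MeasureTheory Filter Set Real YukawaAux

noncomputable def F (l m : ℝ) : ℝ × ℝ × ℝ → ℂ := fun p =>
  ((Real.exp (-(l * Real.sqrt (p.1 ^ 2 + (p.2.1 ^ 2 + p.2.2 ^ 2)))) /
    Real.sqrt (p.1 ^ 2 + (p.2.1 ^ 2 + p.2.2 ^ 2)) : ℝ) : ℂ) *
    Complex.exp (-(Complex.I * (m * p.1)))

lemma F_aesm (l m : ℝ) : AEStronglyMeasurable (F l m) (volume : Measure (ℝ × ℝ × ℝ)) := by
  apply Measurable.aestronglyMeasurable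
  unfold F
  fun_prop

lemma ae_ne_zero : ∀ᵐ z : ℝ ∂(volume : Measure ℝ), z ≠ 0 := by
  rw [ae_iff]
  simp only [not_not]
  rw [show {z : ℝ | z = 0} = {0} from by ext; simp]
  exact measure_singleton 0

lemma F_slice_integrable {l m : ℝ} (hl : 0 < l) {z : ℝ} (hz : z ≠ 0) :
    Integrable (fun v : ℝ × ℝ => F l m (z, v)) := by
  have hrw : (fun v : ℝ × ℝ => F l m (z, v)) = fun v : ℝ × ℝ =>
      ((Real.exp (-(l * Real.sqrt (z ^ 2 + (v.1 ^ 2 + v.2 ^ 2)))) /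
        Real.sqrt (z ^ 2 + (v.1 ^ 2 + v.2 ^ 2)) : ℝ) : ℂ) *
        Complex.exp (-(Complex.I * (m * z))) := rfl
  rw [hrw]
  exact (Integrable.ofReal (twoD_integrable hl hz)).mul_const (Complex.exp (-(Complex.I * (m * z))))

lemma F_norm_int {l m : ℝ} (hl : 0 < l) {z : ℝ} (hz : z ≠ 0) :
    (∫ v : ℝ × ℝ, ‖F l m (z, v)‖) = (2 * π / l) * Real.exp (-(l * |z|)) := by
  rw [← twoD_integral hl hz]
  congr 1
  ext v
  unfold F
  simp only [norm_mul, Complex.norm_real, Real.norm_eq_abs, Complex.norm_exp]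
  have h0 : (-(Complex.I * (m * z))).re = 0 := by simp
  rw [h0, Real.exp_zero, mul_one, _root_.abs_of_nonneg]
  positivity

lemma F_integrable {l m : ℝ} (hl : 0 < l) :
    Integrable (F l m) (volume : Measure (ℝ × ℝ × ℝ)) := by
  rw [Measure.volume_eq_prod ℝ (ℝ × ℝ)]
  rw [integrable_prod_iff (by have := F_aesm l m; rwa [Measure.volume_eq_prod] at this)]
  constructor
  · filter_upwards [ae_ne_zero] with z hz
    exact F_slice_integrable hl hz
  · apply Integrable.congr (((exp_abs_integrable hl).const_mul (2 * π / l)))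
    filter_upwards [ae_ne_zero] with z hz
    rw [F_norm_int hl hz]

lemma F_integral {l m : ℝ} (hl : 0 < l) :
    (∫ p : ℝ × ℝ × ℝ, F l m p) = ((4 * π / (l ^ 2 + m ^ 2) : ℝ) : ℂ) := by
  have hFi : Integrable (F l m) ((volume : Measure ℝ).prod (volume : Measure (ℝ × ℝ))) := by
    have := F_integrable (m := m) hl; rwa [Measure.volume_eq_prod] at this
  rw [Measure.volume_eq_prod ℝ (ℝ × ℝ), MeasureTheory.integral_prod _ hFi]
  have hinner : ∀ z : ℝ, z ≠ 0 → (∫ v : ℝ × ℝ, F l m (z, v))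
      = (((2 * π / l) * Real.exp (-(l * |z|)) : ℝ) : ℂ) * Complex.exp (-(Complex.I * (m * z))) := by
    intro z hz
    have hrw : (fun v : ℝ × ℝ => F l m (z, v)) = fun v : ℝ × ℝ =>
        ((Real.exp (-(l * Real.sqrt (z ^ 2 + (v.1 ^ 2 + v.2 ^ 2)))) /
          Real.sqrt (z ^ 2 + (v.1 ^ 2 + v.2 ^ 2)) : ℝ) : ℂ) *
            Complex.exp (-(Complex.I * (m * z))) := rfl
    rw [hrw, integral_mul_const]
    congr 1
    rw [show (∫ v : ℝ × ℝ, ((Real.exp (-(l * Real.sqrt (z ^ 2 + (v.1 ^ 2 + v.2 ^ 2)))) /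
        Real.sqrt (z ^ 2 + (v.1 ^ 2 + v.2 ^ 2)) : ℝ) : ℂ))
      = ((∫ v : ℝ × ℝ, Real.exp (-(l * Real.sqrt (z ^ 2 + (v.1 ^ 2 + v.2 ^ 2)))) /
        Real.sqrt (z ^ 2 + (v.1 ^ 2 + v.2 ^ 2)) : ℝ) : ℂ) from integral_ofReal,
      twoD_integral hl hz]
  rw [integral_congr_ae (g := fun z : ℝ =>
      (((2 * π / l) : ℝ) : ℂ) * ((((Real.exp (-(l * |z|))) : ℝ) : ℂ) *
        Complex.exp (-(Complex.I * (m * z)))))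
    (by filter_upwards [ae_ne_zero] with z hz
        rw [hinner z hz]; push_cast; ring)]
  rw [MeasureTheory.integral_const_mul, oneD hl]
  have hne : (l ^ 2 + m ^ 2 : ℝ) ≠ 0 := by positivity
  have : (2 * π / l : ℝ) * (2 * l / (l ^ 2 + m ^ 2)) = 4 * π / (l ^ 2 + m ^ 2) := by
    field_simp
    ring
  rw [← this]
  push_cast
  ring

end YukawaAuxB

open YukawaAux YukawaAuxB in
/-- The three-dimensional Fourier transform of the screened Coulomb (Yukawa) potential:
`∫ (e^{−λr}/r) e^{−i⟪q,x⟫} dx = 4π/(λ² + q²)`. -/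
theorem yukawa_fourier (l : ℝ) (hl : 0 < l) (q : EuclideanSpace ℝ (Fin 3)) :
    Integrable (fun x : EuclideanSpace ℝ (Fin 3) =>
      ((Real.exp (-(l * ‖x‖)) / ‖x‖ : ℝ) : ℂ) *
        Complex.exp (-(Complex.I * (⟪q, x⟫ : ℝ)))) ∧
    ∫ x : EuclideanSpace ℝ (Fin 3),
        ((Real.exp (-(l * ‖x‖)) / ‖x‖ : ℝ) : ℂ) *
          Complex.exp (-(Complex.I * (⟪q, x⟫ : ℝ)))
      = ((4 * Real.pi / (l ^ 2 + ‖q‖ ^ 2) : ℝ) : ℂ) := by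
  obtain ⟨b, hb⟩ : ∃ b : OrthonormalBasis (Fin 3) ℝ (EuclideanSpace ℝ (Fin 3)),
      ∀ x, ⟪q, x⟫ = ‖q‖ * b.repr x 2 := by
    rcases eq_or_ne q 0 with rfl | hq
    · exact ⟨EuclideanSpace.basisFun (Fin 3) ℝ, fun x => by simp⟩
    · have hq' : ‖q‖ ≠ 0 := norm_ne_zero_iff.2 hq
      have hu : Orthonormal ℝ (Set.restrict ({2} : Set (Fin 3))
          (fun _ : Fin 3 => (‖q‖⁻¹ • q))) := by
        constructor
        · intro i
          simp [Set.restrict, norm_smul, hq']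
        · intro i j hij
          exact absurd (Subtype.ext (i.2.trans j.2.symm)) hij
      obtain ⟨b, hb2⟩ := hu.exists_orthonormalBasis_extension_of_card_eq
        (by simp [finrank_euclideanSpace])
      refine ⟨b, fun x => ?_⟩
      rw [b.repr_apply_apply, hb2 2 rfl, real_inner_smul_left]
      field_simp
  let ψ : EuclideanSpace ℝ (Fin 3) ≃ᵐ ℝ × (ℝ × ℝ) :=
    (MeasurableEquiv.toLp 2 (Fin 3 → ℝ)).symm.trans
      ((MeasurableEquiv.piFinSuccAbove (fun _ : Fin 3 => ℝ) 2).trans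
        ((MeasurableEquiv.refl ℝ).prodCongr (MeasurableEquiv.finTwoArrow)))
  have hψ : MeasurePreserving ψ volume volume := by
    have h1 := EuclideanSpace.volume_preserving_symm_measurableEquiv_toLp (Fin 3)
    have h2 := volume_preserving_piFinSuccAbove (fun _ : Fin 3 => ℝ) 2
    have h3 := (MeasurePreserving.id (volume : Measure ℝ)).prod (volume_preserving_finTwoArrow ℝ)
    exact (h3.comp h2).comp h1
  have hbmp : MeasurePreserving b.repr volume volume := b.measurePreserving_repr
  have hcomp : MeasurePreserving (⇑ψ ∘ ⇑b.repr) volume volume := hψ.comp hbmp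
  have hemb : MeasurableEmbedding (⇑ψ ∘ ⇑b.repr) :=
    ψ.measurableEmbedding.comp b.repr.toHomeomorph.toMeasurableEquiv.measurableEmbedding
  have key : (fun x : EuclideanSpace ℝ (Fin 3) =>
      ((Real.exp (-(l * ‖x‖)) / ‖x‖ : ℝ) : ℂ) * Complex.exp (-(Complex.I * (⟪q, x⟫ : ℝ))))
      = (F l ‖q‖) ∘ (⇑ψ ∘ ⇑b.repr) := by
    funext x
    have hψapp : ψ (b.repr x) = (b.repr x 2, (b.repr x 0, b.repr x 1)) := rfl
    simp only [Function.comp_apply, hψapp]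
    unfold F
    simp only
    have hnorm : Real.sqrt ((b.repr x 2) ^ 2 + ((b.repr x 0) ^ 2 + (b.repr x 1) ^ 2)) = ‖x‖ := by
      rw [← b.repr.norm_map x, EuclideanSpace.norm_eq, Fin.sum_univ_three]
      simp only [Real.norm_eq_abs, sq_abs]
      ring_nf
    rw [hnorm, hb x]
    norm_cast
  rw [key]
  constructor
  · exact (hcomp.integrable_comp_emb hemb).2 (F_integrable hl)
  · rw [show (∫ x, ((F l ‖q‖) ∘ (⇑ψ ∘ ⇑b.repr)) x) = ∫ x, F l ‖q‖ ((⇑ψ ∘ ⇑b.repr) x) from rfl]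
    rw [hcomp.integral_comp hemb]
    exact F_integral hl
end

section
/- For every q ∈ ℝ³ with q ≠ 0, the screened Coulomb Fourier integrals converge to the Coulomb value as the screening parameter tends to zero: the function λ ↦ ∫_{ℝ³} (exp(−λ‖x‖)/‖x‖) · exp(−i⟪q,x⟫) dx tends to 4π/‖q‖² as λ → 0 from the right (along the filter 𝓝[>] 0). -/
open MeasureTheory Filter
open scoped RealInnerProductSpace

section aux
open MeasureTheory Filter Set Real

lemma integral_cexp_neg_mul_Ioi {a : ℂ} (ha : 0 < a.re) :
    ∫ z in Ioi (0:ℝ), Complex.exp (-(a * z)) = 1 / a := by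
  have ha' : a ≠ 0 := fun h => by simp [h] at ha
  have hderiv : ∀ z : ℝ, HasDerivAt (fun z : ℝ => -(Complex.exp (-(a * z)) / a))
      (Complex.exp (-(a * z))) z := by
    intro z
    have h1 : HasDerivAt (fun z : ℝ => -(a * z)) (-a) z := by
      simpa using ((hasDerivAt_id z).ofReal_comp.const_mul (-a))
    have h2 := (Complex.hasDerivAt_exp _).comp z h1
    have h3 := (h2.div_const a).neg
    convert h3 using 1
    · rfl
    · rfl
    field_simp
  have hint : IntegrableOn (fun z : ℝ => Complex.exp (-(a * z))) (Ioi 0) := by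
    refine Integrable.mono' (g := fun z : ℝ => Real.exp (-a.re * z))
      (exp_neg_integrableOn_Ioi 0 ha) ?_ ?_
    · exact (Complex.continuous_exp.comp (by continuity)).aestronglyMeasurable
    · filter_upwards with z
      rw [Complex.norm_exp]
      simp [neg_mul]
  have htend : Tendsto (fun z : ℝ => -(Complex.exp (-(a * z)) / a)) atTop (nhds 0) := by
    rw [← neg_zero]
    apply Tendsto.neg
    rw [show (0:ℂ) = 0 / a by simp]
    apply Tendsto.div_const
    rw [tendsto_zero_iff_norm_tendsto_zero]
    have : (fun z : ℝ => ‖Complex.exp (-(a * z))‖) = fun z : ℝ => Real.exp (-(a.re * z)) := by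
      ext z
      rw [Complex.norm_exp]
      simp
    rw [this]
    exact (Real.tendsto_exp_atBot).comp
      (tendsto_neg_atBot_iff.mpr (Tendsto.const_mul_atTop ha tendsto_id))
  have := integral_Ioi_of_hasDerivAt_of_tendsto
    (hderiv 0).continuousAt.continuousWithinAt (fun x _ => hderiv x) hint htend
  rw [this]
  simp

lemma integrable_exp_neg_mul_abs {l : ℝ} (hl : 0 < l) :
    Integrable (fun z : ℝ => Real.exp (-(l * |z|))) := by
  have hIoi : IntegrableOn (fun z : ℝ => Real.exp (-(l * |z|))) (Ioi 0) := by
    refine (exp_neg_integrableOn_Ioi 0 hl).congr_fun (fun x hx => ?_) measurableSet_Ioi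
    rw [abs_of_pos hx]
    simp only [neg_mul]
  have hIic : IntegrableOn (fun z : ℝ => Real.exp (-(l * |z|))) (Iic 0) := by
    rw [← Measure.map_neg_eq_self (volume : Measure ℝ)]
    have m : MeasurableEmbedding fun x : ℝ => -x := (Homeomorph.neg ℝ).measurableEmbedding
    rw [m.integrableOn_map_iff]
    simp_rw [Function.comp_def, abs_neg, neg_preimage, neg_Iic, neg_zero]
    exact Iff.mpr integrableOn_Ici_iff_integrableOn_Ioi hIoi
  rw [← integrableOn_univ, ← Iic_union_Ioi (a := (0:ℝ))]
  exact hIic.union hIoi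

lemma oneD {l : ℝ} (k : ℝ) (hl : 0 < l) :
    ∫ z : ℝ, (Real.exp (-(l * |z|)) : ℂ) * Complex.exp (-(Complex.I * (k * z)))
      = 2 * l / (l ^ 2 + k ^ 2) := by
  set f : ℝ → ℂ := fun z => (Real.exp (-(l * |z|)) : ℂ) * Complex.exp (-(Complex.I * (k * z)))
    with hf
  have hfi : Integrable f := by
    refine (integrable_exp_neg_mul_abs hl).mono' ?_ ?_
    · apply Continuous.aestronglyMeasurable
      fun_prop
    · filter_upwards with z
      rw [hf]
      simp only [norm_mul, Complex.norm_real, Real.norm_eq_abs, Real.abs_exp]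
      rw [Complex.norm_exp]
      simp
  have hsplit : (∫ z, f z) = (∫ z in Iic (0:ℝ), f z) + ∫ z in Ioi (0:ℝ), f z := by
    rw [← setIntegral_union (Iic_disjoint_Ioi le_rfl) measurableSet_Ioi hfi.integrableOn
      hfi.integrableOn, Iic_union_Ioi, Measure.restrict_univ]
  have hIoi : (∫ z in Ioi (0:ℝ), f z) = 1 / (l + Complex.I * k) := by
    rw [← integral_cexp_neg_mul_Ioi (a := l + Complex.I * k) (by simp [hl])]
    refine setIntegral_congr_fun measurableSet_Ioi (fun z hz => ?_)
    rw [hf]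
    simp only
    rw [abs_of_pos hz, Complex.ofReal_exp, ← Complex.exp_add]
    congr 1
    push_cast
    ring
  have hIic : (∫ z in Iic (0:ℝ), f z) = 1 / (l - Complex.I * k) := by
    have := integral_comp_neg_Ioi (0:ℝ) f
    rw [neg_zero] at this
    rw [← this, ← integral_cexp_neg_mul_Ioi (a := l - Complex.I * k) (by simp [hl])]
    refine setIntegral_congr_fun measurableSet_Ioi (fun z hz => ?_)
    rw [hf]
    simp only [abs_neg]
    rw [abs_of_pos hz, Complex.ofReal_exp, ← Complex.exp_add]
    congr 1
    push_cast
    ring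
  rw [hsplit, hIoi, hIic]
  have h1 : (l : ℂ) + Complex.I * k ≠ 0 := by
    intro h
    have := congrArg Complex.re h
    simp at this
    exact hl.ne' this
  have h2 : (l : ℂ) - Complex.I * k ≠ 0 := by
    intro h
    have := congrArg Complex.re h
    simp at this
    exact hl.ne' this
  have h3 : ((l:ℂ) ^ 2 + (k:ℂ) ^ 2) ≠ 0 := by
    have : ((l:ℂ) ^ 2 + (k:ℂ) ^ 2) = (l + Complex.I * k) * (l - Complex.I * k) := by
      ring_nf
      rw [Complex.I_sq]
      ring
    rw [this]
    exact mul_ne_zero h1 h2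
  have : ((2:ℂ) * l / ((l:ℂ) ^ 2 + (k:ℂ) ^ 2)) = 1 / (l - Complex.I * k) + 1 / (l + Complex.I * k) := by
    rw [div_add_div _ _ h2 h1, div_eq_div_iff h3 (mul_ne_zero h2 h1)]
    ring_nf
    rw [Complex.I_sq]
    ring
  rw [this]


lemma radial_integral {l c : ℝ} (hl : 0 < l) (hc : 0 < c) :
    ∫ ρ in Ioi (0:ℝ), ρ * (Real.exp (-(l * Real.sqrt (c^2+ρ^2))) / Real.sqrt (c^2+ρ^2))
      = Real.exp (-(l*c)) / l := by
  set F : ℝ → ℝ := fun ρ => -(Real.exp (-(l * Real.sqrt (c^2+ρ^2))) / l) with hF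
  have hs : ∀ ρ : ℝ, 0 < c^2 + ρ^2 := fun ρ => by positivity
  have hsq : ∀ ρ : ℝ, 0 < Real.sqrt (c^2+ρ^2) := fun ρ => Real.sqrt_pos.mpr (hs ρ)
  have hderiv : ∀ ρ : ℝ, HasDerivAt F
      (ρ * (Real.exp (-(l * Real.sqrt (c^2+ρ^2))) / Real.sqrt (c^2+ρ^2))) ρ := by
    intro ρ
    have h1 : HasDerivAt (fun ρ : ℝ => c^2 + ρ^2) (2*ρ) ρ := by
      simpa using ((hasDerivAt_pow 2 ρ).const_add (c^2))
    have h2 := (Real.hasDerivAt_sqrt (hs ρ).ne').comp ρ h1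
    have h3 := ((h2.const_mul l).neg).exp
    have h4 := (h3.div_const l).neg
    convert h4 using 1
    · rfl
    · rfl
    · rfl
    simp only [Pi.neg_apply, Function.comp_apply]
    field_simp
  have hbound : ∀ ρ : ℝ, ρ ∈ Ioi (0:ℝ) →
      ‖ρ * (Real.exp (-(l * Real.sqrt (c^2+ρ^2))) / Real.sqrt (c^2+ρ^2))‖
        ≤ Real.exp (-l * ρ) := by
    intro ρ hρ
    have hρ0 : (0:ℝ) < ρ := hρ
    have hsge : ρ ≤ Real.sqrt (c^2+ρ^2) := by
      rw [show (c^2+ρ^2) = ρ^2 + c^2 by ring]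
      nlinarith [Real.sqrt_le_sqrt (show ρ^2 ≤ ρ^2 + c^2 by nlinarith), Real.sqrt_sq hρ0.le]
    rw [Real.norm_eq_abs, abs_of_nonneg (by positivity)]
    calc ρ * (Real.exp (-(l * Real.sqrt (c^2+ρ^2))) / Real.sqrt (c^2+ρ^2))
        ≤ Real.sqrt (c^2+ρ^2) * (Real.exp (-(l * Real.sqrt (c^2+ρ^2))) / Real.sqrt (c^2+ρ^2)) := by
          apply mul_le_mul_of_nonneg_right hsge (by positivity)
      _ = Real.exp (-(l * Real.sqrt (c^2+ρ^2))) := by field_simp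
      _ ≤ Real.exp (-l * ρ) := by
          apply Real.exp_le_exp.mpr
          rw [neg_mul]
          exact neg_le_neg (mul_le_mul_of_nonneg_left hsge hl.le)
  have hint : IntegrableOn
      (fun ρ => ρ * (Real.exp (-(l * Real.sqrt (c^2+ρ^2))) / Real.sqrt (c^2+ρ^2))) (Ioi 0) := by
    refine (exp_neg_integrableOn_Ioi 0 hl).mono' ?_ ?_
    · apply Continuous.aestronglyMeasurable
      exact continuous_id.mul (Continuous.div (by fun_prop) (by fun_prop) fun ρ => (hsq ρ).ne')
    · filter_upwards [ae_restrict_mem measurableSet_Ioi] with ρ hρ using hbound ρ hρ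
  have hexp0 : Tendsto (fun ρ : ℝ => Real.exp (-l * ρ)) atTop (nhds 0) := by
    simpa only [Function.comp_def, ← neg_mul, id_eq] using (Real.tendsto_exp_atBot).comp
      (tendsto_neg_atBot_iff.mpr (Tendsto.const_mul_atTop hl tendsto_id))
  have htend : Tendsto F atTop (nhds 0) := by
    have h1 : Tendsto (fun ρ : ℝ => Real.exp (-(l * Real.sqrt (c^2+ρ^2)))) atTop (nhds 0) := by
      apply squeeze_zero (fun ρ => (Real.exp_pos _).le)
        (g := fun ρ => Real.exp (-l * ρ))
      · intro ρ
        apply Real.exp_le_exp.mpr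
        rw [neg_mul]
        apply neg_le_neg
        apply mul_le_mul_of_nonneg_left _ hl.le
        calc ρ ≤ |ρ| := le_abs_self ρ
          _ = Real.sqrt (ρ^2) := (Real.sqrt_sq_eq_abs ρ).symm
          _ ≤ Real.sqrt (c^2+ρ^2) := Real.sqrt_le_sqrt (by nlinarith)
      · exact hexp0
    have := (h1.div_const l).neg
    simpa using this
  have := integral_Ioi_of_hasDerivAt_of_tendsto
    (hderiv 0).continuousAt.continuousWithinAt (fun x _ => hderiv x) hint htend
  rw [this, hF]
  norm_num [Real.sqrt_sq hc.le]

lemma sqrt_ge_abs_left (c a b : ℝ) : |a| ≤ Real.sqrt (c^2 + (a^2 + b^2)) := by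
  rw [← Real.sqrt_sq_eq_abs]
  exact Real.sqrt_le_sqrt (by nlinarith)

lemma sqrt_ge_abs_right (c a b : ℝ) : |b| ≤ Real.sqrt (c^2 + (a^2 + b^2)) := by
  rw [← Real.sqrt_sq_eq_abs]
  exact Real.sqrt_le_sqrt (by nlinarith)

lemma sqrt_ge_abs_c (c a b : ℝ) : |c| ≤ Real.sqrt (c^2 + (a^2 + b^2)) := by
  rw [← Real.sqrt_sq_eq_abs]
  exact Real.sqrt_le_sqrt (by nlinarith)

lemma twoD_integrable {l c : ℝ} (hl : 0 < l) (hc : c ≠ 0) :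
    Integrable (fun y : ℝ × ℝ =>
      Real.exp (-(l * Real.sqrt (c^2 + (y.1^2 + y.2^2)))) / Real.sqrt (c^2 + (y.1^2 + y.2^2))) := by
  have hc' : 0 < |c| := abs_pos.mpr hc
  have hs : ∀ y : ℝ × ℝ, 0 < Real.sqrt (c^2 + (y.1^2 + y.2^2)) := fun y =>
    lt_of_lt_of_le hc' (sqrt_ge_abs_c c y.1 y.2)
  have hdom : Integrable (fun y : ℝ × ℝ =>
      ((1/|c|) * Real.exp (-(l/2 * |y.1|))) * Real.exp (-(l/2 * |y.2|))) := by
    rw [Measure.volume_eq_prod]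
    exact ((integrable_exp_neg_mul_abs (half_pos hl)).const_mul (1/|c|)).mul_prod
      (integrable_exp_neg_mul_abs (half_pos hl))
  refine hdom.mono' ?_ ?_
  · apply Continuous.aestronglyMeasurable
    exact Continuous.div (by fun_prop) (by fun_prop) fun y => (hs y).ne'
  · filter_upwards with y
    rw [Real.norm_eq_abs, abs_of_nonneg (by positivity)]
    have h1 : Real.exp (-(l * Real.sqrt (c^2 + (y.1^2 + y.2^2))))
        ≤ Real.exp (-(l/2 * |y.1|)) * Real.exp (-(l/2 * |y.2|)) := by
      rw [← Real.exp_add]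
      apply Real.exp_le_exp.mpr
      have := sqrt_ge_abs_left c y.1 y.2
      have := sqrt_ge_abs_right c y.1 y.2
      nlinarith
    have h2 : Real.exp (-(l * Real.sqrt (c^2 + (y.1^2 + y.2^2))))
        / Real.sqrt (c^2 + (y.1^2 + y.2^2))
        ≤ Real.exp (-(l * Real.sqrt (c^2 + (y.1^2 + y.2^2)))) / |c| := by
      apply div_le_div_of_nonneg_left (Real.exp_pos _).le hc' (sqrt_ge_abs_c c y.1 y.2)
    calc Real.exp (-(l * Real.sqrt (c^2 + (y.1^2 + y.2^2)))) / Real.sqrt (c^2 + (y.1^2 + y.2^2))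
        ≤ Real.exp (-(l * Real.sqrt (c^2 + (y.1^2 + y.2^2)))) / |c| := h2
      _ ≤ (Real.exp (-(l/2 * |y.1|)) * Real.exp (-(l/2 * |y.2|))) / |c| := by
          gcongr
      _ = ((1/|c|) * Real.exp (-(l/2 * |y.1|))) * Real.exp (-(l/2 * |y.2|)) := by ring

lemma twoD_integral {l c : ℝ} (hl : 0 < l) (hc : 0 < c) :
    ∫ y : ℝ × ℝ, Real.exp (-(l * Real.sqrt (c^2 + (y.1^2 + y.2^2))))
        / Real.sqrt (c^2 + (y.1^2 + y.2^2))
      = (2 * Real.pi) * (Real.exp (-(l*c)) / l) := by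
  rw [← integral_comp_polarCoord_symm]
  simp only [polarCoord_symm_apply]
  have heq : ∀ p ∈ polarCoord.target,
      p.1 • (Real.exp (-(l * Real.sqrt (c^2 + ((p.1 * Real.cos p.2)^2 + (p.1 * Real.sin p.2)^2))))
        / Real.sqrt (c^2 + ((p.1 * Real.cos p.2)^2 + (p.1 * Real.sin p.2)^2)))
      = p.1 * (Real.exp (-(l * Real.sqrt (c^2 + p.1^2))) / Real.sqrt (c^2 + p.1^2)) := by
    intro p _
    have : (p.1 * Real.cos p.2)^2 + (p.1 * Real.sin p.2)^2 = p.1^2 := by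
      rw [mul_pow, mul_pow, ← mul_add, Real.cos_sq_add_sin_sq, mul_one]
    rw [this, smul_eq_mul]
  rw [setIntegral_congr_fun polarCoord.open_target.measurableSet heq] -- may need adjusting
  rw [polarCoord_target, Measure.volume_eq_prod, ← Measure.prod_restrict]
  rw [integral_fun_fst (f := fun ρ : ℝ =>
    ρ * (Real.exp (-(l * Real.sqrt (c^2 + ρ^2))) / Real.sqrt (c^2 + ρ^2)))]
  rw [measureReal_def, Measure.restrict_apply_univ, Real.volume_Ioo, radial_integral hl hc]
  rw [ENNReal.toReal_ofReal (by linarith [Real.pi_pos]), smul_eq_mul]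
  ring_nf

lemma threeD {l : ℝ} (k : ℝ) (hl : 0 < l) :
    ∫ p : ℝ × ℝ × ℝ,
      ((Real.exp (-(l * Real.sqrt (p.1^2 + (p.2.1^2 + p.2.2^2))))
          / Real.sqrt (p.1^2 + (p.2.1^2 + p.2.2^2)) : ℝ) : ℂ)
        * Complex.exp (-(Complex.I * (k * p.1)))
      = 4 * Real.pi / (l^2 + k^2) := by
  set g : ℝ → ℝ × ℝ → ℝ := fun z y =>
    Real.exp (-(l * Real.sqrt (z^2 + (y.1^2 + y.2^2)))) / Real.sqrt (z^2 + (y.1^2 + y.2^2))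
    with hg
  set f : ℝ × (ℝ × ℝ) → ℂ := fun p =>
    ((g p.1 p.2 : ℝ) : ℂ) * Complex.exp (-(Complex.I * (k * p.1))) with hf
  have h0 : ∀ᵐ z : ℝ, z ≠ (0:ℝ) := by
    rw [ae_iff]; simp [Set.setOf_eq_eq_singleton]
  have hmeas : AEStronglyMeasurable f (volume : Measure (ℝ × (ℝ × ℝ))) := by
    apply Measurable.aestronglyMeasurable
    apply Measurable.mul
    · apply Complex.measurable_ofReal.comp
      fun_prop
    · fun_prop
  have habs : ∀ z : ℝ, z ≠ 0 → (∫ y : ℝ × ℝ, g z y) = 2 * Real.pi * (Real.exp (-(l*|z|)) / l) := by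
    intro z hz
    have h2 := twoD_integral hl (c := |z|) (abs_pos.mpr hz)
    rw [hg]
    simp only
    rw [← h2]
    congr 1
    ext y
    rw [sq_abs]
  have hnormf : ∀ z : ℝ, ∀ y : ℝ × ℝ, ‖f (z, y)‖ = g z y := by
    intro z y
    simp only [hf, norm_mul, Complex.norm_real, Real.norm_eq_abs,
      Complex.norm_exp]
    rw [abs_of_nonneg (show (0:ℝ) ≤ g z y by simp only [hg]; positivity)]
    have : (-(Complex.I * ((k:ℂ) * (z:ℂ)))).re = 0 := by simp
    rw [this, Real.exp_zero, mul_one]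
  have hintf : Integrable f (volume : Measure (ℝ × (ℝ × ℝ))) := by
    rw [Measure.volume_eq_prod] at hmeas ⊢
    rw [integrable_prod_iff hmeas]
    constructor
    · filter_upwards [h0] with z hz
      have : Integrable (fun y : ℝ × ℝ => ((g z y : ℝ) : ℂ)) := (twoD_integrable hl hz).ofReal
      simpa [hf] using this.mul_const (Complex.exp (-(Complex.I * (k * z))))
    · apply Integrable.congr
        (f := fun z : ℝ => 2 * Real.pi * (Real.exp (-(l*|z|)) / l))
      · apply Integrable.const_mul
        exact (integrable_exp_neg_mul_abs hl).div_const l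
      · filter_upwards [h0] with z hz
        rw [← habs z hz]
        simp_rw [hnormf]
  rw [show (∫ p : ℝ × ℝ × ℝ,
      ((Real.exp (-(l * Real.sqrt (p.1^2 + (p.2.1^2 + p.2.2^2))))
          / Real.sqrt (p.1^2 + (p.2.1^2 + p.2.2^2)) : ℝ) : ℂ)
        * Complex.exp (-(Complex.I * (k * p.1)))) = ∫ p, f p from rfl]
  rw [Measure.volume_eq_prod] at hintf ⊢
  rw [integral_prod f hintf]
  have hinner : ∀ᵐ z : ℝ, (∫ y : ℝ × ℝ, f (z, y))
      = ((2 * Real.pi / l : ℝ) : ℂ) * (((Real.exp (-(l * |z|)) : ℝ) : ℂ)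
          * Complex.exp (-(Complex.I * (k * z)))) := by
    filter_upwards [h0] with z hz
    have : (∫ y : ℝ × ℝ, f (z, y))
        = (∫ y : ℝ × ℝ, ((g z y : ℝ) : ℂ)) * Complex.exp (-(Complex.I * (k * z))) := by
      rw [← integral_mul_const]
    rw [this, show (∫ y : ℝ × ℝ, ((g z y : ℝ) : ℂ)) = ((∫ y, g z y : ℝ) : ℂ) from integral_ofReal,
      habs z hz]
    push_cast
    ring
  rw [integral_congr_ae hinner, integral_const_mul, oneD k hl]
  have hl2 : ((l:ℂ)^2 + (k:ℂ)^2) ≠ 0 := by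
    intro h
    rw [show ((l:ℂ)^2 + (k:ℂ)^2) = ((l^2+k^2 : ℝ) : ℂ) by push_cast; ring] at h
    have : l^2+k^2 = 0 := by exact_mod_cast h
    nlinarith
  have hlne : (l:ℂ) ≠ 0 := by exact_mod_cast hl.ne'
  push_cast
  field_simp
  ring

open scoped RealInnerProductSpace

lemma yukawa_value {l : ℝ} (hl : 0 < l) (q : EuclideanSpace ℝ (Fin 3)) (hq : q ≠ 0) :
    ∫ x : EuclideanSpace ℝ (Fin 3),
        ((Real.exp (-(l * ‖x‖)) / ‖x‖ : ℝ) : ℂ) * Complex.exp (-(Complex.I * (⟪q, x⟫ : ℝ)))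
      = 4 * Real.pi / (l ^ 2 + ‖q‖ ^ 2) := by
  set k : ℝ := ‖q‖ with hk
  set u : EuclideanSpace ℝ (Fin 3) := k • EuclideanSpace.single (0 : Fin 3) (1:ℝ) with hu
  have hnu : ‖u‖ = ‖q‖ := by
    rw [hu, norm_smul, EuclideanSpace.norm_single]
    simp [hk, abs_of_nonneg (norm_nonneg q)]
  set R := Submodule.reflection (Submodule.span ℝ {u - q})ᗮ with hR
  have hRu : R u = q := Submodule.reflection_sub hnu
  have hRq : R q = u := by rw [← hRu, hR, Submodule.reflection_reflection]
  have hstep1 : ∫ x : EuclideanSpace ℝ (Fin 3),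
        ((Real.exp (-(l * ‖x‖)) / ‖x‖ : ℝ) : ℂ) * Complex.exp (-(Complex.I * (⟪q, x⟫ : ℝ)))
      = ∫ x : EuclideanSpace ℝ (Fin 3),
        ((Real.exp (-(l * ‖x‖)) / ‖x‖ : ℝ) : ℂ) * Complex.exp (-(Complex.I * (k * x 0))) := by
    rw [← (Submodule.reflection (Submodule.span ℝ {u - q})ᗮ).measurePreserving.integral_comp
      (Submodule.reflection (Submodule.span ℝ {u - q})ᗮ).toHomeomorph.measurableEmbedding
      (fun x => ((Real.exp (-(l * ‖x‖)) / ‖x‖ : ℝ) : ℂ)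
        * Complex.exp (-(Complex.I * (⟪q, x⟫ : ℝ))))]
    congr 1
    ext x
    have h1 : ‖R x‖ = ‖x‖ := R.norm_map x
    have h2 : ⟪q, R x⟫ = k * x 0 := by
      calc ⟪q, R x⟫ = ⟪R (R q), R x⟫ := by rw [hR, Submodule.reflection_reflection]
        _ = ⟪R q, x⟫ := R.inner_map_map (R q) x
        _ = ⟪u, x⟫ := by rw [hRq]
        _ = k * x 0 := by
            rw [hu, real_inner_smul_left, EuclideanSpace.inner_single_left]
            simp
    rw [h1, h2]
    push_cast
    ring_nf
  rw [hstep1]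
  -- step 2: Euclidean space to Pi type
  have hstep2 : ∫ x : EuclideanSpace ℝ (Fin 3),
        ((Real.exp (-(l * ‖x‖)) / ‖x‖ : ℝ) : ℂ) * Complex.exp (-(Complex.I * (k * x 0)))
      = ∫ v : Fin 3 → ℝ,
        ((Real.exp (-(l * Real.sqrt (v 0 ^ 2 + (v 1 ^ 2 + v 2 ^ 2))))
            / Real.sqrt (v 0 ^ 2 + (v 1 ^ 2 + v 2 ^ 2)) : ℝ) : ℂ)
          * Complex.exp (-(Complex.I * (k * v 0))) := by
    rw [← (PiLp.volume_preserving_toLp (Fin 3)).integral_comp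
      (MeasurableEquiv.toLp 2 (Fin 3 → ℝ)).measurableEmbedding
      (fun x : EuclideanSpace ℝ (Fin 3) => ((Real.exp (-(l * ‖x‖)) / ‖x‖ : ℝ) : ℂ)
        * Complex.exp (-(Complex.I * (k * x 0))))]
    congr 1
    ext v
    have hnorm : ‖(WithLp.toLp 2 v : EuclideanSpace ℝ (Fin 3))‖
        = Real.sqrt (v 0 ^ 2 + (v 1 ^ 2 + v 2 ^ 2)) := by
      rw [EuclideanSpace.norm_eq]
      congr 1
      rw [Fin.sum_univ_three]
      simp only [Real.norm_eq_abs, sq_abs]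
      show v 0 ^ 2 + v 1 ^ 2 + v 2 ^ 2 = v 0 ^ 2 + (v 1 ^ 2 + v 2 ^ 2)
      ring
    have happ : (WithLp.toLp 2 v : EuclideanSpace ℝ (Fin 3)) 0 = v 0 := rfl
    rw [hnorm, happ]
  rw [hstep2]
  -- step 3: split off first coordinate
  have hstep3 : ∫ v : Fin 3 → ℝ,
        ((Real.exp (-(l * Real.sqrt (v 0 ^ 2 + (v 1 ^ 2 + v 2 ^ 2))))
            / Real.sqrt (v 0 ^ 2 + (v 1 ^ 2 + v 2 ^ 2)) : ℝ) : ℂ)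
          * Complex.exp (-(Complex.I * (k * v 0)))
      = ∫ p : ℝ × (Fin 2 → ℝ),
        ((Real.exp (-(l * Real.sqrt (p.1 ^ 2 + (p.2 0 ^ 2 + p.2 1 ^ 2))))
            / Real.sqrt (p.1 ^ 2 + (p.2 0 ^ 2 + p.2 1 ^ 2)) : ℝ) : ℂ)
          * Complex.exp (-(Complex.I * (k * p.1))) := by
    rw [← ((volume_preserving_piFinSuccAbove (fun _ : Fin 3 => ℝ) 0).symm _).integral_comp
      (MeasurableEquiv.piFinSuccAbove (fun _ : Fin 3 => ℝ) 0).symm.measurableEmbedding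
      (fun v : Fin 3 → ℝ =>
        ((Real.exp (-(l * Real.sqrt (v 0 ^ 2 + (v 1 ^ 2 + v 2 ^ 2))))
            / Real.sqrt (v 0 ^ 2 + (v 1 ^ 2 + v 2 ^ 2)) : ℝ) : ℂ)
          * Complex.exp (-(Complex.I * (k * v 0))))]
    congr 1
  rw [hstep3]
  -- step 4: split the remaining two coordinates
  have hstep4 : ∫ p : ℝ × (Fin 2 → ℝ),
        ((Real.exp (-(l * Real.sqrt (p.1 ^ 2 + (p.2 0 ^ 2 + p.2 1 ^ 2))))
            / Real.sqrt (p.1 ^ 2 + (p.2 0 ^ 2 + p.2 1 ^ 2)) : ℝ) : ℂ)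
          * Complex.exp (-(Complex.I * (k * p.1)))
      = ∫ p : ℝ × ℝ × ℝ,
        ((Real.exp (-(l * Real.sqrt (p.1 ^ 2 + (p.2.1 ^ 2 + p.2.2 ^ 2))))
            / Real.sqrt (p.1 ^ 2 + (p.2.1 ^ 2 + p.2.2 ^ 2)) : ℝ) : ℂ)
          * Complex.exp (-(Complex.I * (k * p.1))) := by
    have hmp : MeasurePreserving
        (Prod.map (id : ℝ → ℝ) (MeasurableEquiv.finTwoArrow (α := ℝ)))
        ((volume : Measure ℝ).prod (volume : Measure (Fin 2 → ℝ)))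
        ((volume : Measure ℝ).prod (volume : Measure (ℝ × ℝ))) :=
      (MeasurePreserving.id _).prod (volume_preserving_finTwoArrow ℝ)
    have hemb : MeasurableEmbedding
        (Prod.map (id : ℝ → ℝ) (MeasurableEquiv.finTwoArrow (α := ℝ))) :=
      (MeasurableEquiv.prodCongr (MeasurableEquiv.refl ℝ)
        (MeasurableEquiv.finTwoArrow (α := ℝ))).measurableEmbedding
    rw [Measure.volume_eq_prod, Measure.volume_eq_prod,
      ← hmp.integral_comp hemb
      (fun p : ℝ × ℝ × ℝ =>
        ((Real.exp (-(l * Real.sqrt (p.1 ^ 2 + (p.2.1 ^ 2 + p.2.2 ^ 2))))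
            / Real.sqrt (p.1 ^ 2 + (p.2.1 ^ 2 + p.2.2 ^ 2)) : ℝ) : ℂ)
          * Complex.exp (-(Complex.I * (k * p.1))))]
    rfl
  rw [hstep4, threeD k hl]


end aux

/-- As the screening parameter `λ` tends to `0⁺`, the Fourier transform of the screened
Coulomb potential tends to the Coulomb value `4π/q²`. -/
theorem yukawa_fourier_tendsto_coulomb (q : EuclideanSpace ℝ (Fin 3)) (hq : q ≠ 0) :
    Tendsto (fun l : ℝ =>
        ∫ x : EuclideanSpace ℝ (Fin 3),
          ((Real.exp (-(l * ‖x‖)) / ‖x‖ : ℝ) : ℂ) *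
            Complex.exp (-(Complex.I * (⟪q, x⟫ : ℝ))))
      (nhdsWithin 0 (Set.Ioi 0))
      (nhds ((4 * Real.pi / ‖q‖ ^ 2 : ℝ) : ℂ)) := by
  have hk : 0 < ‖q‖ := lt_of_le_of_ne (norm_nonneg q) (Ne.symm (norm_ne_zero_iff.mpr hq))
  have hreal : Tendsto (fun l : ℝ => 4 * Real.pi / (l ^ 2 + ‖q‖ ^ 2))
      (nhdsWithin 0 (Set.Ioi 0)) (nhds (4 * Real.pi / ‖q‖ ^ 2)) := by
    have hc : ContinuousAt (fun l : ℝ => 4 * Real.pi / (l ^ 2 + ‖q‖ ^ 2)) 0 := by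
      apply ContinuousAt.div
      · fun_prop
      · fun_prop
      · positivity
    have := hc.tendsto.mono_left (nhdsWithin_le_nhds (s := Set.Ioi (0:ℝ)))
    convert this using 2
    norm_num
  have hC : Tendsto (fun l : ℝ => ((4 * Real.pi / (l ^ 2 + ‖q‖ ^ 2) : ℝ) : ℂ))
      (nhdsWithin 0 (Set.Ioi 0)) (nhds ((4 * Real.pi / ‖q‖ ^ 2 : ℝ) : ℂ)) :=
    (Complex.continuous_ofReal.tendsto _).comp hreal
  apply Tendsto.congr' _ hC
  filter_upwards [self_mem_nhdsWithin] with l hl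
  rw [yukawa_value hl q hq]
  push_cast
  ring
end

section
/- Let V : ℝ → ℂ be measurable with ∫₀^∞ r² ‖V(r)‖ dr < ∞. Then for every q ∈ ℝ³ with q ≠ 0, the function x ↦ V(‖x‖)·exp(−i⟪q,x⟫) is integrable on ℝ³ and ∫_{ℝ³} V(‖x‖) · exp(−i⟪q,x⟫) dx = (4π/‖q‖) · ∫₀^∞ V(r) · r · sin(‖q‖·r) dr. (Reduction of the three-dimensional Fourier transform of a spherically symmetric potential to a one-dimensional integral.) -/
open MeasureTheory Filter
open scoped RealInnerProductSpace

section helpers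
open Measure Set Metric Complex ENNReal

private lemma aux_lintegral_fun_norm_addHaar {E : Type*} [NormedAddCommGroup E] [NormedSpace ℝ E]
    [MeasurableSpace E] [BorelSpace E] [Nontrivial E] [FiniteDimensional ℝ E]
    (μ : Measure E) [μ.IsAddHaarMeasure] (f : ℝ → ℝ≥0∞) (hf : Measurable f) :
    ∫⁻ x, f ‖x‖ ∂μ = μ.toSphere univ *
      ∫⁻ r in Ioi (0:ℝ), ENNReal.ofReal (r ^ (Module.finrank ℝ E - 1)) * f r := by
  have hmf : Measurable fun p : sphere (0:E) 1 × Ioi (0:ℝ) => f p.2.1 :=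
    (hf.comp measurable_subtype_coe).comp measurable_snd
  have h1 : ∫⁻ x, f ‖x‖ ∂μ = ∫⁻ x : ({0}ᶜ : Set E), f ‖x.1‖ ∂(μ.comap (↑)) := by
    have := lintegral_subtype_comap (μ := μ) (measurableSet_singleton (0:E)).compl
      (fun x => f ‖x‖)
    rw [MeasureTheory.restrict_compl_singleton] at this
    exact this.symm
  have h2 : ∫⁻ x : ({0}ᶜ : Set E), f ‖x.1‖ ∂(μ.comap (↑)) =
      ∫⁻ p : sphere (0:E) 1 × Ioi (0:ℝ), f p.2.1
        ∂(μ.toSphere.prod (volumeIoiPow (Module.finrank ℝ E - 1))) := by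
    have := μ.measurePreserving_homeomorphUnitSphereProd.lintegral_comp
      (f := fun p : sphere (0:E) 1 × Ioi (0:ℝ) => f p.2.1) hmf
    simpa using this
  have h3 : ∫⁻ p : sphere (0:E) 1 × Ioi (0:ℝ), f p.2.1
        ∂(μ.toSphere.prod (volumeIoiPow (Module.finrank ℝ E - 1))) =
      μ.toSphere univ * ∫⁻ r : Ioi (0:ℝ), f r ∂(volumeIoiPow (Module.finrank ℝ E - 1)) := by
    rw [lintegral_prod _ hmf.aemeasurable]
    simp [mul_comm]
  have h4 : ∫⁻ r : Ioi (0:ℝ), f r ∂(volumeIoiPow (Module.finrank ℝ E - 1)) =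
      ∫⁻ r in Ioi (0:ℝ), ENNReal.ofReal (r ^ (Module.finrank ℝ E - 1)) * f r := by
    rw [Measure.volumeIoiPow]
    rw [lintegral_withDensity_eq_lintegral_mul _
      (f := fun r : Ioi (0:ℝ) => ENNReal.ofReal (r.1 ^ (Module.finrank ℝ E - 1)))
      (by exact (measurable_subtype_coe.pow_const _).ennreal_ofReal)
      (by exact hf.comp measurable_subtype_coe : Measurable fun r : Ioi (0:ℝ) => f r.1)]
    simp only [Pi.mul_apply]
    exact lintegral_subtype_comap measurableSet_Ioi
      (fun r => ENNReal.ofReal (r ^ (Module.finrank ℝ E - 1)) * f r)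
  rw [h1, h2, h3, h4]

private lemma aux_twoD_radial (g : ℝ → ℂ) :
    ∫ w : EuclideanSpace ℝ (Fin 2), g ‖w‖
      = (2 * Real.pi) • ∫ s in Ioi (0:ℝ), s • g s := by
  rw [MeasureTheory.integral_fun_norm_addHaar (volume : Measure (EuclideanSpace ℝ (Fin 2))) g]
  have hd : Module.finrank ℝ (EuclideanSpace ℝ (Fin 2)) = 2 := by
    simp [finrank_euclideanSpace]
  have hb : (volume (ball (0 : EuclideanSpace ℝ (Fin 2)) 1)).toReal = Real.pi := by
    rw [EuclideanSpace.volume_ball]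
    norm_num [Real.Gamma_two, Real.sq_sqrt Real.pi_nonneg, Real.pi_nonneg]
  rw [hd, measureReal_def, hb]
  norm_num [← Nat.cast_smul_eq_nsmul ℝ, smul_smul]
  ring

private lemma aux_subst_radial (V : ℝ → ℂ) (z : ℝ) :
    ∫ r in Ioi |z|, r • V r
      = ∫ s in Ioi (0:ℝ), s • V (Real.sqrt (z^2 + s^2)) := by
  have key : ∀ s : ℝ, 0 < s → 0 < z^2 + s^2 := fun s hs => by positivity
  have himg : (fun s => Real.sqrt (z^2 + s^2)) '' Ioi 0 = Ioi |z| := by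
    ext r
    constructor
    · rintro ⟨s, hs, rfl⟩
      have : z^2 < z^2 + s^2 := by nlinarith [mem_Ioi.1 hs]
      calc |z| = Real.sqrt (z^2) := (Real.sqrt_sq_eq_abs z).symm
        _ < Real.sqrt (z^2 + s^2) := Real.sqrt_lt_sqrt (sq_nonneg z) this
    · intro hr
      have hr' : |z| < r := hr
      have hr0 : 0 ≤ r := (abs_nonneg z).trans hr'.le
      have hz2 : z^2 < r^2 := by nlinarith [_root_.sq_abs z, abs_nonneg z]
      refine ⟨Real.sqrt (r^2 - z^2), ?_, ?_⟩
      · simpa [mem_Ioi] using Real.sqrt_pos.2 (by linarith : (0:ℝ) < r^2 - z^2)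
      · show Real.sqrt (z^2 + Real.sqrt (r^2-z^2)^2) = r
        rw [Real.sq_sqrt (by linarith : (0:ℝ) ≤ r^2 - z^2),
          show z^2 + (r^2 - z^2) = r^2 by ring, Real.sqrt_sq hr0]
  have hderiv : ∀ s ∈ Ioi (0:ℝ), HasDerivWithinAt (fun s => Real.sqrt (z^2 + s^2))
      (s / Real.sqrt (z^2 + s^2)) (Ioi 0) s := by
    intro s hs
    have h1 : HasDerivAt (fun s : ℝ => z^2 + s^2) (2*s) s := by
      simpa using (hasDerivAt_pow 2 s).const_add (z^2)
    have h2 := (Real.hasDerivAt_sqrt (key s hs).ne').comp s h1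
    have h3 : Real.sqrt (z^2 + s^2) ≠ 0 := (Real.sqrt_pos.2 (key s hs)).ne'
    have heq : (1 / (2 * Real.sqrt (z^2 + s^2))) * (2*s) = s / Real.sqrt (z^2 + s^2) := by
      field_simp
    rw [← heq]
    exact h2.hasDerivWithinAt
  have hinj : InjOn (fun s => Real.sqrt (z^2 + s^2)) (Ioi 0) := by
    intro a ha b hb hab
    simp only at hab
    have ha' : (0:ℝ) < a := ha
    have hb' : (0:ℝ) < b := hb
    have h2 : z^2 + a^2 = z^2 + b^2 := by
      have := congrArg (fun t => t^2) hab
      simpa [Real.sq_sqrt (key a ha').le, Real.sq_sqrt (key b hb').le] using this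
    have h3 : a^2 = b^2 := by linarith
    nlinarith [h3, ha', hb']
  rw [← himg, integral_image_eq_integral_abs_deriv_smul measurableSet_Ioi hderiv hinj]
  refine setIntegral_congr_fun measurableSet_Ioi fun s hs => ?_
  have hs' : (0:ℝ) < s := hs
  have hsq : 0 < Real.sqrt (z^2 + s^2) := Real.sqrt_pos.2 (key s hs')
  rw [_root_.abs_of_nonneg (by positivity), smul_smul, div_mul_cancel₀ _ hsq.ne']

private lemma aux_exp_Ioo_integral (k : ℝ) (hk : k ≠ 0) (r : ℝ) (hr : 0 < r) :
    ∫ z in Ioo (-r) r, Complex.exp (-(Complex.I * ((k*z : ℝ) : ℂ)))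
      = ((2 * Real.sin (k*r) / k : ℝ) : ℂ) := by
  have hc : -(Complex.I * (k:ℂ)) ≠ 0 := by
    simp [Complex.I_ne_zero, Complex.ext_iff, hk]
  have h1 : ∀ z : ℝ, -(Complex.I * ((k*z : ℝ) : ℂ)) = (-(Complex.I * (k:ℂ))) * (z:ℂ) := by
    intro z; push_cast; ring
  rw [← integral_Ioc_eq_integral_Ioo, ← intervalIntegral.integral_of_le (by linarith : -r ≤ r)]
  simp_rw [h1]
  rw [integral_exp_mul_complex hc]
  rw [Complex.ofReal_div, Complex.ofReal_mul, Complex.ofReal_sin, Complex.ofReal_mul]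
  rw [Complex.sin]
  push_cast
  rw [div_eq_div_iff hc (by simp [Complex.ext_iff, hk] : ((k:ℝ):ℂ) ≠ 0)]
  ring_nf
  simp [Complex.I_sq]
  ring

private noncomputable def auxΨe : (ℝ × EuclideanSpace ℝ (Fin 2)) ≃ᵐ EuclideanSpace ℝ (Fin 3) :=
  ((MeasurableEquiv.refl ℝ).prodCongr ((MeasurableEquiv.toLp 2 (Fin 2 → ℝ)).symm)).trans
    (((MeasurableEquiv.piFinSuccAbove (fun _ : Fin 3 => ℝ) 0).symm).trans
      ((MeasurableEquiv.toLp 2 (Fin 3 → ℝ)).symm).symm)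

private lemma auxΨe_measurePreserving : MeasurePreserving auxΨe volume volume := by
  have hco : ⇑auxΨe = (⇑((MeasurableEquiv.toLp 2 (Fin 3 → ℝ)).symm).symm) ∘
      ((⇑(MeasurableEquiv.piFinSuccAbove (fun _ : Fin 3 => ℝ) 0).symm) ∘
        (Prod.map id (⇑((MeasurableEquiv.toLp 2 (Fin 2 → ℝ)).symm)))) := rfl
  rw [hco, MeasureTheory.Measure.volume_eq_prod]
  refine MeasurePreserving.comp (μb := (volume : Measure (ℝ × (Fin 2 → ℝ))))
    (MeasurePreserving.comp (μb := (volume : Measure (Fin 3 → ℝ))) ?_ ?_) ?_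
  · exact (EuclideanSpace.volume_preserving_symm_measurableEquiv_toLp (Fin 3)).symm
  · exact (volume_preserving_piFinSuccAbove (fun _ : Fin 3 => ℝ) 0).symm
  · exact (MeasurePreserving.id volume).prod
      (EuclideanSpace.volume_preserving_symm_measurableEquiv_toLp (Fin 2))

private lemma auxΨe_apply_zero (p : ℝ × EuclideanSpace ℝ (Fin 2)) : (auxΨe p) 0 = p.1 := by
  simp [auxΨe, MeasurableEquiv.piFinSuccAbove_symm_apply, MeasurableEquiv.toLp,
    MeasurableEquiv.prodCongr, MeasurableEquiv.trans, MeasurableEquiv.refl]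

private lemma auxΨe_apply_succ (p : ℝ × EuclideanSpace ℝ (Fin 2)) (j : Fin 2) :
    (auxΨe p) (Fin.succ j) = p.2 j := by
  simp [auxΨe, MeasurableEquiv.piFinSuccAbove_symm_apply, MeasurableEquiv.toLp,
    MeasurableEquiv.prodCongr, MeasurableEquiv.trans, MeasurableEquiv.refl,
    Fin.insertNth_zero]
  rfl

private lemma auxΨe_norm (p : ℝ × EuclideanSpace ℝ (Fin 2)) :
    ‖auxΨe p‖ = Real.sqrt (p.1^2 + ‖p.2‖^2) := by
  have key : ∑ i, ‖auxΨe p i‖^2 = p.1^2 + ‖p.2‖^2 := by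
    have h2 : ‖p.2‖^2 = ∑ j, (p.2 j)^2 := by
      rw [EuclideanSpace.norm_eq, Real.sq_sqrt (by positivity)]
      simp [_root_.sq_abs]
    rw [Fin.sum_univ_succ, auxΨe_apply_zero, h2]
    simp only [auxΨe_apply_succ, Real.norm_eq_abs, _root_.sq_abs]
  rw [EuclideanSpace.norm_eq, key]

end helpers

private lemma aux_nnnorm_exp (t : ℝ) :
    (‖Complex.exp (-(Complex.I * (t : ℂ)))‖₊ : ENNReal) = 1 := by
  have h : ‖Complex.exp (-(Complex.I * (t:ℂ)))‖ = 1 := by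
    rw [Complex.norm_exp]
    simp
  rw [← enorm_eq_nnnorm, ← ofReal_norm, h]
  simp

/-- Reduction of the 3D Fourier transform of a spherically symmetric potential to a
one-dimensional integral:
`∫ V(‖x‖) e^{−i⟪q,x⟫} dx = (4π/q) ∫₀^∞ V(r) r sin(qr) dr`. -/
theorem fourier_radial_potential
    (V : ℝ → ℂ) (hV : Measurable V)
    (hint : IntegrableOn (fun r : ℝ => r ^ 2 * ‖V r‖) (Set.Ioi 0))
    (q : EuclideanSpace ℝ (Fin 3)) (hq : q ≠ 0) :
    Integrable (fun x : EuclideanSpace ℝ (Fin 3) =>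
      V ‖x‖ * Complex.exp (-(Complex.I * (⟪q, x⟫ : ℝ)))) ∧
    ∫ x : EuclideanSpace ℝ (Fin 3), V ‖x‖ * Complex.exp (-(Complex.I * (⟪q, x⟫ : ℝ)))
      = ((4 * Real.pi / ‖q‖ : ℝ) : ℂ) *
          ∫ r in Set.Ioi (0 : ℝ), V r * (r : ℂ) * (Real.sin (‖q‖ * r) : ℂ) := by
  classical
  set k : ℝ := ‖q‖ with hkdef
  have hk : 0 < k := norm_pos_iff.2 hq
  -- an orthonormal basis whose first vector is `k⁻¹ • q`
  have hnorm_e : ‖(k⁻¹ • q : EuclideanSpace ℝ (Fin 3))‖ = 1 := by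
    rw [norm_smul, norm_inv, Real.norm_eq_abs, abs_of_pos hk]
    rw [← hkdef]
    field_simp
  have hcard : Module.finrank ℝ (EuclideanSpace ℝ (Fin 3)) = Fintype.card (Fin 3) := by
    simp [finrank_euclideanSpace]
  have hv : Orthonormal ℝ
      (Set.restrict {0} (fun _ : Fin 3 => (k⁻¹ • q : EuclideanSpace ℝ (Fin 3)))) := by
    constructor
    · intro i; exact hnorm_e
    · intro i j hij
      exact absurd (Subtype.ext ((Set.mem_singleton_iff.1 i.2).trans
        (Set.mem_singleton_iff.1 j.2).symm)) hij
  obtain ⟨b, hb⟩ := hv.exists_orthonormalBasis_extension_of_card_eq hcard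
  have hb0 : b 0 = k⁻¹ • q := hb 0 rfl
  have hinner : ∀ x : EuclideanSpace ℝ (Fin 3), (⟪q, x⟫ : ℝ) = k * (b.repr x 0) := by
    intro x
    rw [b.repr_apply_apply, hb0, real_inner_smul_left]
    field_simp
  set G : EuclideanSpace ℝ (Fin 3) → ℂ :=
    fun y => V ‖y‖ * Complex.exp (-(Complex.I * ((k * y 0 : ℝ) : ℂ))) with hGdef
  have hFG : ∀ x : EuclideanSpace ℝ (Fin 3),
      V ‖x‖ * Complex.exp (-(Complex.I * ((⟪q, x⟫ : ℝ) : ℂ))) = G (b.repr x) := by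
    intro x
    simp only [hGdef]
    rw [b.repr.norm_map, ← hinner x]
  have hy0 : Measurable fun y : EuclideanSpace ℝ (Fin 3) => y 0 := by
    exact ((continuous_apply (0 : Fin 3)).comp
      (PiLp.continuous_ofLp 2 (fun _ : Fin 3 => ℝ))).measurable
  have hGmeas : Measurable G := by
    apply (hV.comp measurable_norm).mul
    apply Complex.measurable_exp.comp
    exact ((Complex.measurable_ofReal.comp (hy0.const_mul k)).const_mul Complex.I).neg
  have hVfin : ∫⁻ r in Set.Ioi (0:ℝ), ENNReal.ofReal (r^2) * ‖V r‖₊ < ⊤ := by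
    have h := hint.2
    rw [hasFiniteIntegral_def] at h
    refine lt_of_le_of_lt (le_of_eq ?_) h
    refine setLIntegral_congr_fun measurableSet_Ioi (fun r hr => ?_)
    rw [← enorm_eq_nnnorm, ← ofReal_norm, ← ofReal_norm,
      Real.norm_of_nonneg (mul_nonneg (sq_nonneg r) (norm_nonneg _))]
    exact (ENNReal.ofReal_mul (sq_nonneg r)).symm
  have hGint : Integrable G := by
    refine ⟨hGmeas.aestronglyMeasurable, ?_⟩
    rw [hasFiniteIntegral_def]
    have hnormG : ∀ y : EuclideanSpace ℝ (Fin 3),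
        (‖G y‖₊ : ENNReal) = (fun r => (‖V r‖₊ : ENNReal)) ‖y‖ := by
      intro y
      simp only [hGdef]
      rw [nnnorm_mul, ENNReal.coe_mul, aux_nnnorm_exp, mul_one]
    calc ∫⁻ y, (‖G y‖₊ : ENNReal)
        = ∫⁻ y : EuclideanSpace ℝ (Fin 3), (fun r => (‖V r‖₊ : ENNReal)) ‖y‖ :=
          lintegral_congr hnormG
      _ = (volume : Measure (EuclideanSpace ℝ (Fin 3))).toSphere Set.univ *
            ∫⁻ r in Set.Ioi (0:ℝ),
              ENNReal.ofReal (r ^ (Module.finrank ℝ (EuclideanSpace ℝ (Fin 3)) - 1)) * ‖V r‖₊ :=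
          aux_lintegral_fun_norm_addHaar _ _ hV.enorm
      _ < ⊤ := by
          rw [show Module.finrank ℝ (EuclideanSpace ℝ (Fin 3)) - 1 = 2 by
            simp [finrank_euclideanSpace]]
          exact ENNReal.mul_lt_top (measure_lt_top _ _) hVfin
  have hIntF : Integrable (fun x : EuclideanSpace ℝ (Fin 3) =>
      V ‖x‖ * Complex.exp (-(Complex.I * ((⟪q, x⟫ : ℝ) : ℂ)))) := by
    have heq : (fun x : EuclideanSpace ℝ (Fin 3) =>
        V ‖x‖ * Complex.exp (-(Complex.I * ((⟪q, x⟫ : ℝ) : ℂ)))) = fun x => G (b.repr x) :=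
      funext hFG
    rw [heq]
    exact (b.measurePreserving_repr.integrable_comp_emb
      b.repr.toHomeomorph.measurableEmbedding).2 hGint
  refine ⟨hIntF, ?_⟩
  have step1 : ∫ x : EuclideanSpace ℝ (Fin 3),
      V ‖x‖ * Complex.exp (-(Complex.I * ((⟪q, x⟫ : ℝ) : ℂ)))
      = ∫ y : EuclideanSpace ℝ (Fin 3), G y := by
    rw [funext hFG]
    exact b.measurePreserving_repr.integral_comp b.repr.toHomeomorph.measurableEmbedding G
  have hGΨint : Integrable (fun p : ℝ × EuclideanSpace ℝ (Fin 2) => G (auxΨe p))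
      ((volume : Measure ℝ).prod (volume : Measure (EuclideanSpace ℝ (Fin 2)))) := by
    rw [← MeasureTheory.Measure.volume_eq_prod]
    exact (auxΨe_measurePreserving.integrable_comp_emb auxΨe.measurableEmbedding).2 hGint
  have step2 : ∫ y : EuclideanSpace ℝ (Fin 3), G y
      = ∫ z : ℝ, ∫ w : EuclideanSpace ℝ (Fin 2), G (auxΨe (z, w)) := by
    rw [← auxΨe_measurePreserving.integral_comp auxΨe.measurableEmbedding G,
      MeasureTheory.Measure.volume_eq_prod]
    exact MeasureTheory.integral_prod _ hGΨint
  have hGΨ : ∀ (z : ℝ) (w : EuclideanSpace ℝ (Fin 2)), G (auxΨe (z,w)) =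
      V (Real.sqrt (z^2 + ‖w‖^2)) * Complex.exp (-(Complex.I * ((k*z : ℝ) : ℂ))) := by
    intro z w
    simp only [hGdef]
    rw [auxΨe_norm, auxΨe_apply_zero]
  have step3 : ∀ z : ℝ, ∫ w : EuclideanSpace ℝ (Fin 2), G (auxΨe (z, w))
      = (2 * Real.pi) • ((∫ r in Set.Ioi |z|, r • V r) *
          Complex.exp (-(Complex.I * ((k*z : ℝ) : ℂ)))) := by
    intro z
    simp_rw [hGΨ z]
    rw [MeasureTheory.integral_mul_const]
    rw [show (∫ w : EuclideanSpace ℝ (Fin 2), V (Real.sqrt (z^2 + ‖w‖^2)))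
        = ∫ w : EuclideanSpace ℝ (Fin 2), (fun t => V (Real.sqrt (z^2 + t^2))) ‖w‖ from rfl]
    rw [aux_twoD_radial (fun t => V (Real.sqrt (z^2 + t^2)))]
    rw [show (∫ s in Set.Ioi (0:ℝ), s • (fun t => V (Real.sqrt (z^2 + t^2))) s)
        = ∫ s in Set.Ioi (0:ℝ), s • V (Real.sqrt (z^2 + s^2)) from rfl]
    rw [← aux_subst_radial V z, smul_mul_assoc]
  -- the two-variable kernel
  set T : Set (ℝ × ℝ) := {p : ℝ × ℝ | |p.1| < p.2} with hTdef
  have hTmeas : MeasurableSet T := measurableSet_lt (measurable_fst.abs) measurable_snd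
  set g0 : ℝ × ℝ → ℂ := fun p => ((p.2 : ℂ) * V p.2) *
    Complex.exp (-(Complex.I * ((k*p.1 : ℝ) : ℂ))) with hg0def
  set f : ℝ → ℝ → ℂ := fun z r => T.indicator g0 (z, r) with hfdef
  have hg0meas : Measurable g0 := by
    apply ((Complex.measurable_ofReal.comp measurable_snd).mul (hV.comp measurable_snd)).mul
    apply Complex.measurable_exp.comp
    exact ((Complex.measurable_ofReal.comp (measurable_fst.const_mul k)).const_mul
      Complex.I).neg
  have hfz : ∀ z : ℝ, (fun r => f z r) = Set.indicator (Set.Ioi |z|)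
      (fun r => ((r:ℂ) * V r) * Complex.exp (-(Complex.I * ((k*z : ℝ) : ℂ)))) := by
    intro z; funext r
    simp only [hfdef]
    by_cases h : |z| < r
    · rw [Set.indicator_of_mem (show (z,r) ∈ T from h),
        Set.indicator_of_mem (Set.mem_Ioi.2 h)]
    · rw [Set.indicator_of_notMem (show (z,r) ∉ T from h),
        Set.indicator_of_notMem (fun hc => h (Set.mem_Ioi.1 hc))]
  have hf1 : ∀ z : ℝ, ∫ r : ℝ, f z r = (∫ r in Set.Ioi |z|, (r:ℂ) * V r) *
      Complex.exp (-(Complex.I * ((k*z:ℝ):ℂ))) := by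
    intro z
    rw [hfz z, MeasureTheory.integral_indicator measurableSet_Ioi,
      MeasureTheory.integral_mul_const]
  have hsmulmul : ∀ z : ℝ, (∫ r in Set.Ioi |z|, r • V r)
      = ∫ r in Set.Ioi |z|, (r:ℂ) * V r :=
    fun z => setIntegral_congr_fun measurableSet_Ioi (fun r _ => Complex.real_smul)
  have hfint : Integrable (Function.uncurry f)
      ((volume : Measure ℝ).prod (volume : Measure ℝ)) := by
    have huncurry : Function.uncurry f = T.indicator g0 := by
      funext p; cases p; rfl
    rw [huncurry]
    refine ⟨(hg0meas.indicator hTmeas).aestronglyMeasurable, ?_⟩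
    rw [hasFiniteIntegral_def]
    rw [lintegral_prod_symm _ ((hg0meas.indicator hTmeas).enorm.aemeasurable)]
    have inner_eq : ∀ r : ℝ, (∫⁻ z : ℝ, (‖T.indicator g0 (z, r)‖₊ : ENNReal))
        = (‖(r:ℂ) * V r‖₊ : ENNReal) * ENNReal.ofReal (r - -r) := by
      intro r
      have hind : (fun z : ℝ => ((‖T.indicator g0 (z, r)‖₊ : ENNReal)))
          = fun z => (Set.Ioo (-r) r).indicator
            (fun _ => (‖(r:ℂ) * V r‖₊ : ENNReal)) z := by
        funext z
        by_cases h : |z| < r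
        · rw [Set.indicator_of_mem (show (z,r) ∈ T from h),
            Set.indicator_of_mem (Set.mem_Ioo.2 (abs_lt.1 h))]
          simp only [hg0def]
          rw [nnnorm_mul, ENNReal.coe_mul, aux_nnnorm_exp, mul_one]
        · rw [Set.indicator_of_notMem (show (z,r) ∉ T from h),
            Set.indicator_of_notMem (fun hc => h (abs_lt.2 (Set.mem_Ioo.1 hc)))]
          simp
      rw [hind, lintegral_indicator_const measurableSet_Ioo, Real.volume_Ioo]
    rw [lintegral_congr (f := fun r => ∫⁻ z : ℝ, ‖T.indicator g0 (z, r)‖ₑ) inner_eq]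
    have hsupp : Function.support (fun r : ℝ =>
        (‖(r:ℂ) * V r‖₊ : ENNReal) * ENNReal.ofReal (r - -r)) ⊆ Set.Ioi 0 := by
      intro r hr
      by_contra hr0
      apply hr
      have hle : r ≤ 0 := by simpa [Set.mem_Ioi] using hr0
      show (‖(r:ℂ) * V r‖₊ : ENNReal) * ENNReal.ofReal (r - -r) = 0
      rw [ENNReal.ofReal_eq_zero.2 (by linarith), mul_zero]
    rw [← setLIntegral_eq_of_support_subset hsupp]
    have hcong : ∀ r ∈ Set.Ioi (0:ℝ), (‖(r:ℂ) * V r‖₊ : ENNReal) * ENNReal.ofReal (r - -r)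
        = 2 * (ENNReal.ofReal (r^2) * ‖V r‖₊) := by
      intro r hr
      have hr' : (0:ℝ) < r := hr
      have h1 : (‖(r:ℂ)‖₊ : ENNReal) = ENNReal.ofReal r := by
        rw [← enorm_eq_nnnorm, ← ofReal_norm, Complex.norm_real,
          Real.norm_of_nonneg hr'.le]
      have h2 : ENNReal.ofReal (r - -r) = 2 * ENNReal.ofReal r := by
        rw [show r - -r = 2*r by ring, ENNReal.ofReal_mul (by norm_num : (0:ℝ) ≤ 2)]
        norm_num
      have h3 : ENNReal.ofReal (r^2) = ENNReal.ofReal r * ENNReal.ofReal r := by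
        rw [← ENNReal.ofReal_mul hr'.le]
        ring_nf
      rw [nnnorm_mul, ENNReal.coe_mul, h1, h2, h3]
      ring
    rw [setLIntegral_congr_fun measurableSet_Ioi hcong]
    rw [lintegral_const_mul' 2 _ (by norm_num)]
    exact ENNReal.mul_lt_top (by norm_num) hVfin
  have swap := MeasureTheory.integral_integral_swap hfint
  have hf2 : ∀ r : ℝ, ∫ z : ℝ, f z r = ((r:ℂ) * V r) *
      ∫ z in Set.Ioo (-r) r, Complex.exp (-(Complex.I * ((k*z:ℝ):ℂ))) := by
    intro r
    have hind : (fun z => f z r) = Set.indicator (Set.Ioo (-r) r)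
        (fun z => ((r:ℂ) * V r) * Complex.exp (-(Complex.I * ((k*z:ℝ):ℂ)))) := by
      funext z
      simp only [hfdef]
      by_cases h : |z| < r
      · rw [Set.indicator_of_mem (show (z,r) ∈ T from h),
          Set.indicator_of_mem (Set.mem_Ioo.2 (abs_lt.1 h))]
      · rw [Set.indicator_of_notMem (show (z,r) ∉ T from h),
          Set.indicator_of_notMem (fun hc => h (abs_lt.2 (Set.mem_Ioo.1 hc)))]
    rw [hind, MeasureTheory.integral_indicator measurableSet_Ioo,
      MeasureTheory.integral_const_mul]
  have hvanish : ∀ r : ℝ, r ∉ Set.Ioi (0:ℝ) → ((r:ℂ) * V r) *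
      (∫ z in Set.Ioo (-r) r, Complex.exp (-(Complex.I * ((k*z:ℝ):ℂ)))) = 0 := by
    intro r hr
    have hr' : r ≤ 0 := by simpa [Set.mem_Ioi] using hr
    rw [Set.Ioo_eq_empty (by intro h; linarith)]
    simp
  have step4 : ∫ r : ℝ, ∫ z : ℝ, f z r = ((2 / k : ℝ) : ℂ) *
      ∫ r in Set.Ioi (0:ℝ), V r * (r:ℂ) * (Real.sin (k*r) : ℂ) := by
    calc ∫ r : ℝ, ∫ z : ℝ, f z r
        = ∫ r : ℝ, ((r:ℂ) * V r) *
            ∫ z in Set.Ioo (-r) r, Complex.exp (-(Complex.I * ((k*z:ℝ):ℂ))) := by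
          rw [show (fun r : ℝ => ∫ z : ℝ, f z r) = fun r : ℝ => ((r:ℂ) * V r) *
            ∫ z in Set.Ioo (-r) r, Complex.exp (-(Complex.I * ((k*z:ℝ):ℂ))) from funext hf2]
      _ = ∫ r in Set.Ioi (0:ℝ), ((r:ℂ) * V r) *
            ∫ z in Set.Ioo (-r) r, Complex.exp (-(Complex.I * ((k*z:ℝ):ℂ))) :=
          (MeasureTheory.setIntegral_eq_integral_of_forall_compl_eq_zero hvanish).symm
      _ = ∫ r in Set.Ioi (0:ℝ), ((2 / k : ℝ) : ℂ) *
            (V r * (r:ℂ) * (Real.sin (k*r) : ℂ)) := by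
          refine setIntegral_congr_fun measurableSet_Ioi (fun r hr => ?_)
          rw [aux_exp_Ioo_integral k hk.ne' r hr]
          push_cast
          field_simp
      _ = ((2 / k : ℝ) : ℂ) *
            ∫ r in Set.Ioi (0:ℝ), V r * (r:ℂ) * (Real.sin (k*r) : ℂ) :=
          MeasureTheory.integral_const_mul _ _
  rw [step1, step2]
  calc ∫ z : ℝ, ∫ w : EuclideanSpace ℝ (Fin 2), G (auxΨe (z, w))
      = ∫ z : ℝ, (2 * Real.pi) • ((∫ r in Set.Ioi |z|, r • V r) *
          Complex.exp (-(Complex.I * ((k*z : ℝ) : ℂ)))) := by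
        rw [show (fun z : ℝ => ∫ w : EuclideanSpace ℝ (Fin 2), G (auxΨe (z, w)))
          = fun z : ℝ => (2 * Real.pi) • ((∫ r in Set.Ioi |z|, r • V r) *
            Complex.exp (-(Complex.I * ((k*z : ℝ) : ℂ)))) from funext step3]
    _ = (2 * Real.pi) • ∫ z : ℝ, (∫ r in Set.Ioi |z|, r • V r) *
          Complex.exp (-(Complex.I * ((k*z : ℝ) : ℂ))) := integral_smul _ _
    _ = (2 * Real.pi) • ∫ z : ℝ, ∫ r : ℝ, f z r := by
        congr 1
        rw [show (fun z : ℝ => (∫ r in Set.Ioi |z|, r • V r) *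
            Complex.exp (-(Complex.I * ((k*z : ℝ) : ℂ))))
          = fun z : ℝ => ∫ r : ℝ, f z r from funext fun z => by
            rw [hsmulmul z, ← hf1 z]]
    _ = (2 * Real.pi) • ∫ r : ℝ, ∫ z : ℝ, f z r := by rw [swap]
    _ = (2 * Real.pi) • (((2 / k : ℝ) : ℂ) *
          ∫ r in Set.Ioi (0:ℝ), V r * (r:ℂ) * (Real.sin (k*r) : ℂ)) := by rw [step4]
    _ = ((4 * Real.pi / k : ℝ) : ℂ) *
          ∫ r in Set.Ioi (0:ℝ), V r * (r:ℂ) * (Real.sin (k*r) : ℂ) := by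
        rw [Complex.real_smul, ← mul_assoc]
        congr 1
        push_cast
        field_simp
        ring
end

section
/- For all real a > 0 and q > 0, the improper oscillatory integral ∫_{−∞}^{∞} exp(−i·q·z)/√(a² + z²) dz converges: there exists L ∈ ℂ such that the function R ↦ ∫_{−R}^{R} exp(−i·q·z)/√(a² + z²) dz tends to L as R → ∞. (The integrand is not Lebesgue integrable on ℝ, so the integral exists only as a symmetric improper integral; its value is 2K₀(qa).) -/
open MeasureTheory Filter

section Aux

variable (a q : ℝ)

/-- derivative of `z ↦ (√(a²+z²))⁻¹` -/
lemma aux_hasDerivAt_g (ha : 0 < a) (z : ℝ) :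
    HasDerivAt (fun z : ℝ => (Real.sqrt (a ^ 2 + z ^ 2))⁻¹)
      (-z / ((a ^ 2 + z ^ 2) * Real.sqrt (a ^ 2 + z ^ 2))) z := by
  have hpos : 0 < a ^ 2 + z ^ 2 := by positivity
  have h1 : HasDerivAt (fun z : ℝ => a ^ 2 + z ^ 2) (2 * z) z := by
    simpa using (hasDerivAt_pow 2 z).const_add (a ^ 2)
  have h2 : HasDerivAt (fun z : ℝ => Real.sqrt (a ^ 2 + z ^ 2))
      (1 / (2 * Real.sqrt (a ^ 2 + z ^ 2)) * (2 * z)) z :=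
    (Real.hasDerivAt_sqrt hpos.ne').comp z h1
  have hs : 0 < Real.sqrt (a ^ 2 + z ^ 2) := Real.sqrt_pos.mpr hpos
  have h3 := h2.inv hs.ne'
  refine h3.congr_deriv ?_
  have hsq : Real.sqrt (a ^ 2 + z ^ 2) ^ 2 = a ^ 2 + z ^ 2 := Real.sq_sqrt hpos.le
  field_simp
  rw [hsq]

lemma aux_integrable_inv_sq (ha : 0 < a) :
    Integrable (fun z : ℝ => (a ^ 2 + z ^ 2)⁻¹) := by
  have h := (integrable_inv_one_add_sq.comp_div (R := a) ha.ne').const_mul ((a ^ 2)⁻¹)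
  refine h.congr ?_
  filter_upwards with x
  have : a ^ 2 ≠ 0 := by positivity
  field_simp

end Aux

/-- The improper oscillatory integral `∫_{−∞}^{∞} e^{−iqz}/√(a²+z²) dz` converges as a
symmetric improper integral (its value is `2K₀(qa)`), even though the integrand is not
Lebesgue integrable on `ℝ`. -/
theorem oscillatory_integral_converges (a q : ℝ) (ha : 0 < a) (hq : 0 < q) :
    ¬ Integrable (fun z : ℝ =>
        Complex.exp (-(Complex.I * (q : ℂ) * (z : ℂ))) / ((Real.sqrt (a ^ 2 + z ^ 2) : ℝ) : ℂ)) ∧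
    ∃ L : ℂ, Tendsto (fun R : ℝ =>
        ∫ z in Set.Icc (-R) R,
          Complex.exp (-(Complex.I * (q : ℂ) * (z : ℂ))) / ((Real.sqrt (a ^ 2 + z ^ 2) : ℝ) : ℂ))
      atTop (nhds L) := by
  -- notation
  set g : ℝ → ℝ := fun z => (Real.sqrt (a ^ 2 + z ^ 2))⁻¹ with hg
  set g' : ℝ → ℝ := fun z => -z / ((a ^ 2 + z ^ 2) * Real.sqrt (a ^ 2 + z ^ 2)) with hg'
  have hpos : ∀ z : ℝ, 0 < a ^ 2 + z ^ 2 := fun z => by positivity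
  have hspos : ∀ z : ℝ, 0 < Real.sqrt (a ^ 2 + z ^ 2) := fun z => Real.sqrt_pos.mpr (hpos z)
  have hnormexp : ∀ z : ℝ, ‖Complex.exp (-(Complex.I * (q : ℂ) * (z : ℂ)))‖ = 1 := by
    intro z
    rw [Complex.norm_exp]
    simp
  have hnormf : ∀ z : ℝ,
      ‖Complex.exp (-(Complex.I * (q : ℂ) * (z : ℂ))) / ((Real.sqrt (a ^ 2 + z ^ 2) : ℝ) : ℂ)‖
        = g z := by
    intro z
    rw [norm_div, hnormexp z, Complex.norm_real, Real.norm_of_nonneg (hspos z).le, one_div]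
  constructor
  · -- non-integrability
    intro hI
    have hgI : Integrable g := by
      have := hI.norm
      refine this.congr ?_
      filter_upwards with z using (hnormf z)
    have hIOn : IntegrableOn (fun z : ℝ => z⁻¹) (Set.Ioi a) := by
      refine Integrable.mono' ((hgI.const_mul (Real.sqrt 2)).restrict (s := Set.Ioi a)) ?_ ?_
      · exact (measurable_inv.aestronglyMeasurable).restrict
      · rw [ae_restrict_iff' measurableSet_Ioi]
        filter_upwards with z hz
        have hza : a < z := hz
        have hz0 : 0 < z := lt_trans ha hza
        have h1 : Real.sqrt (a ^ 2 + z ^ 2) ≤ Real.sqrt 2 * z := by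
          rw [show Real.sqrt 2 * z = Real.sqrt (2 * z ^ 2) by
            rw [Real.sqrt_mul (by norm_num), Real.sqrt_sq hz0.le]]
          apply Real.sqrt_le_sqrt
          nlinarith
        have h2 : (Real.sqrt 2 * z)⁻¹ ≤ g z := by
          apply inv_anti₀ (hspos z) h1
        rw [Real.norm_of_nonneg (inv_nonneg.mpr hz0.le)]
        calc z⁻¹ = Real.sqrt 2 * (Real.sqrt 2 * z)⁻¹ := by
              rw [mul_inv]
              rw [← mul_assoc, mul_inv_cancel₀ (by positivity : Real.sqrt 2 ≠ 0), one_mul]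
          _ ≤ Real.sqrt 2 * g z := by
              apply mul_le_mul_of_nonneg_left h2 (by positivity)
    have : IntegrableOn (fun z : ℝ => z ^ (-1 : ℝ)) (Set.Ioi a) := by
      refine hIOn.congr_fun ?_ measurableSet_Ioi
      intro x hx
      simp [Real.rpow_neg_one]
    rw [integrableOn_Ioi_rpow_iff ha] at this
    norm_num at this
  · -- convergence
    set c : ℂ := -(Complex.I * (q : ℂ)) with hc
    have hc0 : c ≠ 0 := by
      simp only [hc, neg_ne_zero, mul_ne_zero_iff]
      exact ⟨Complex.I_ne_zero, Complex.ofReal_ne_zero.mpr hq.ne'⟩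
    set e : ℝ → ℂ := fun z => Complex.exp (-(Complex.I * (q : ℂ) * (z : ℂ))) with he
    set v : ℝ → ℂ := fun z => e z * c⁻¹ with hv
    have hude : ∀ z : ℝ, HasDerivAt (fun z : ℝ => ((g z : ℝ) : ℂ)) ((g' z : ℝ) : ℂ) z := by
      intro z
      exact (aux_hasDerivAt_g a ha z).ofReal_comp
    have hede : ∀ z : ℝ, HasDerivAt e (c * e z) z := by
      intro z
      have h0 : HasDerivAt (fun z : ℝ => c * (z : ℂ)) c z := by
        simpa using (Complex.ofRealCLM.hasDerivAt (x := z)).const_mul c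
      have h1 := h0.cexp
      have heq : (fun z : ℝ => Complex.exp (c * (z : ℂ))) = e := by
        funext z; rw [he, hc]; ring_nf
      rw [heq] at h1
      have heq2 : Complex.exp (c * (z : ℂ)) = e z := by rw [he, hc]; ring_nf
      rw [heq2] at h1
      simpa [mul_comm] using h1
    have hvde : ∀ z : ℝ, HasDerivAt v (e z) z := by
      intro z
      have := (hede z).mul_const c⁻¹
      refine this.congr_deriv ?_
      rw [mul_comm c (e z), mul_assoc, mul_inv_cancel₀ hc0, mul_one]
    -- continuity facts
    have hgcont : Continuous fun z : ℝ => ((g z : ℝ) : ℂ) := by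
      apply Complex.continuous_ofReal.comp
      exact (Real.continuous_sqrt.comp (by continuity)).inv₀ fun z => (hspos z).ne'
    have hg'cont : Continuous fun z : ℝ => ((g' z : ℝ) : ℂ) := by
      apply Complex.continuous_ofReal.comp
      exact (continuous_neg.div (by continuity) fun z =>
        (mul_pos (hpos z) (hspos z)).ne')
    have hecont : Continuous e := by
      exact Complex.continuous_exp.comp (by continuity)
    have hvcont : Continuous v := hecont.mul continuous_const
    -- integrability of g' * v on ℝ
    have hGVint : Integrable (fun z : ℝ => ((g' z : ℝ) : ℂ) * v z) := by
      refine Integrable.mono' (((aux_integrable_inv_sq a ha).const_mul (q⁻¹))) ?_ ?_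
      · exact (hg'cont.mul hvcont).aestronglyMeasurable
      · filter_upwards with z
        have hnv : ‖v z‖ = q⁻¹ := by
          rw [hv, norm_mul, hnormexp z, one_mul, norm_inv, hc]
          simp [Complex.norm_I, abs_of_pos hq]
        rw [norm_mul, hnv, Complex.norm_real]
        rw [mul_comm (q⁻¹)]
        apply mul_le_mul_of_nonneg_right _ (inv_nonneg.mpr hq.le)
        rw [Real.norm_eq_abs, hg', abs_div, abs_neg, abs_of_pos (mul_pos (hpos z) (hspos z))]
        rw [div_le_iff₀ (mul_pos (hpos z) (hspos z))]
        calc |z| ≤ Real.sqrt (a ^ 2 + z ^ 2) := by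
              rw [← Real.sqrt_sq_eq_abs]
              exact Real.sqrt_le_sqrt (by nlinarith)
          _ = (a ^ 2 + z ^ 2)⁻¹ * ((a ^ 2 + z ^ 2) * Real.sqrt (a ^ 2 + z ^ 2)) := by
              field_simp
    -- the limit
    refine ⟨-∫ z : ℝ, ((g' z : ℝ) : ℂ) * v z, ?_⟩
    have key : ∀ R : ℝ, 0 ≤ R →
        (∫ z in Set.Icc (-R) R,
          Complex.exp (-(Complex.I * (q : ℂ) * (z : ℂ))) / ((Real.sqrt (a ^ 2 + z ^ 2) : ℝ) : ℂ))
        = ((g R : ℝ) : ℂ) * v R - ((g (-R) : ℝ) : ℂ) * v (-R)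
            - ∫ z in (-R)..R, ((g' z : ℝ) : ℂ) * v z := by
      intro R hR
      have hle : -R ≤ R := by linarith
      have hicc : (∫ z in Set.Icc (-R) R,
          Complex.exp (-(Complex.I * (q : ℂ) * (z : ℂ))) / ((Real.sqrt (a ^ 2 + z ^ 2) : ℝ) : ℂ))
          = ∫ z in (-R)..R, ((g z : ℝ) : ℂ) * e z := by
        rw [intervalIntegral.integral_of_le hle, ← integral_Icc_eq_integral_Ioc]
        apply setIntegral_congr_fun measurableSet_Icc
        intro z _
        rw [he, hg]
        push_cast
        rw [div_eq_mul_inv, mul_comm]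
      rw [hicc]
      exact intervalIntegral.integral_mul_deriv_eq_deriv_mul
        (fun x _ => hude x) (fun x _ => hvde x)
        (hg'cont.intervalIntegrable _ _) (hecont.intervalIntegrable _ _)
    -- boundary terms tend to zero
    have hbound : Tendsto (fun R : ℝ =>
        ((g R : ℝ) : ℂ) * v R - ((g (-R) : ℝ) : ℂ) * v (-R)) atTop (nhds 0) := by
      have hnv : ∀ z : ℝ, ‖v z‖ = q⁻¹ := by
        intro z
        rw [hv, norm_mul, hnormexp z, one_mul, norm_inv, hc]
        simp [Complex.norm_I, abs_of_pos hq]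
      have hb : ∀ R : ℝ, 0 < R →
          ‖((g R : ℝ) : ℂ) * v R - ((g (-R) : ℝ) : ℂ) * v (-R)‖ ≤ 2 / (q * R) := by
        intro R hR
        have hgb : ∀ s : ℝ, s ≠ 0 → g s ≤ |s|⁻¹ := by
          intro s hs
          apply inv_anti₀ (abs_pos.mpr hs)
          rw [show |s| = Real.sqrt (s ^ 2) by rw [Real.sqrt_sq_eq_abs]]
          exact Real.sqrt_le_sqrt (by nlinarith [sq_nonneg a])
        have h1 : ‖((g R : ℝ) : ℂ) * v R‖ ≤ R⁻¹ * q⁻¹ := by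
          rw [norm_mul, hnv, Complex.norm_real, Real.norm_of_nonneg (by positivity : (0:ℝ) ≤ g R)]
          apply mul_le_mul_of_nonneg_right _ (inv_nonneg.mpr hq.le)
          simpa [abs_of_pos hR] using hgb R hR.ne'
        have h2 : ‖((g (-R) : ℝ) : ℂ) * v (-R)‖ ≤ R⁻¹ * q⁻¹ := by
          rw [norm_mul, hnv, Complex.norm_real,
            Real.norm_of_nonneg (by positivity : (0:ℝ) ≤ g (-R))]
          apply mul_le_mul_of_nonneg_right _ (inv_nonneg.mpr hq.le)
          simpa [abs_of_pos hR, abs_neg] using hgb (-R) (neg_ne_zero.mpr hR.ne')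
        calc ‖((g R : ℝ) : ℂ) * v R - ((g (-R) : ℝ) : ℂ) * v (-R)‖
            ≤ ‖((g R : ℝ) : ℂ) * v R‖ + ‖((g (-R) : ℝ) : ℂ) * v (-R)‖ := norm_sub_le _ _
          _ ≤ R⁻¹ * q⁻¹ + R⁻¹ * q⁻¹ := add_le_add h1 h2
          _ = 2 / (q * R) := by field_simp; ring
      apply squeeze_zero_norm'
        (h := by filter_upwards [eventually_gt_atTop (0 : ℝ)] with R hR using hb R hR)
      have hmul : Tendsto (fun R : ℝ => q * R) atTop atTop :=
        Tendsto.const_mul_atTop hq tendsto_id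
      exact Tendsto.div_atTop tendsto_const_nhds hmul
    -- tail integral tends to full integral
    have htail : Tendsto (fun R : ℝ => ∫ z in (-R)..R, ((g' z : ℝ) : ℂ) * v z) atTop
        (nhds (∫ z : ℝ, ((g' z : ℝ) : ℂ) * v z)) :=
      intervalIntegral_tendsto_integral hGVint tendsto_neg_atTop_atBot tendsto_id
    have hfinal := hbound.sub htail
    rw [zero_sub] at hfinal
    apply hfinal.congr'
    filter_upwards [eventually_ge_atTop (0 : ℝ)] with R hR
    exact (key R hR).symm
end
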